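/- arXiv:1904.08351 — 12 statements merged into one kernel-verified Lean document; each statement's English description precedes it below -/
import Mathlib

section
/- Let C denote the blobbed Catalan triangle. For all integers i,j with 1 ≤ j ≤ i, one has C(i,j) = Σ_{k=0}^{j} C(i−1−k, j+1−k). -/
/-- Auxiliary (index-shifted) version of the blobbed Catalan triangle:
`blobbedCAux (i+1) (j+1) = C(i,j)`. -/
def blobbedCAux : ℕ → ℕ → ℕ
  | 0, j => if j % 2 = 0 then 1 else 0
  | 1, j => if j % 2 = 1 then 1 else 0
  | _ + 2, 0 => 0
  | i + 2, j + 1 => blobbedCAux (i + 1) j + blobbedCAux (i + 1) (j + 2)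

/-- The blobbed Catalan triangle `C(i,j)`, defined for integers `i, j ≥ -1`:
`C(i,j) = 1` if `i ∈ {-1,0}` and `i+j` is even, `C(i,j) = 0` if `i ∈ {-1,0}` and `i+j`
is odd, `C(i,-1) = 0` for `i ≥ 1`, and `C(i,j) = C(i-1,j-1) + C(i-1,j+1)` for
`i ≥ 1`, `j ≥ 0`. -/
def blobbedC (i j : ℤ) : ℕ := blobbedCAux (i + 1).toNat (j + 1).toNat

lemma blobbedC_rec (i j : ℤ) (hi : 1 ≤ i) (hj : 0 ≤ j) :
    blobbedC i j = blobbedC (i-1) (j-1) + blobbedC (i-1) (j+1) := by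
  unfold blobbedC
  obtain ⟨n, hn⟩ : ∃ n : ℕ, (i+1).toNat = n + 2 := ⟨(i-1).toNat, by omega⟩
  obtain ⟨m, hm⟩ : ∃ m : ℕ, (j+1).toNat = m + 1 := ⟨j.toNat, by omega⟩
  rw [hn, hm, blobbedCAux]
  congr 1 <;> congr 1 <;> omega

lemma blobbedC_neg (i : ℤ) (hi : 0 ≤ i) : blobbedC i (-1) = 0 := by
  unfold blobbedC
  rcases eq_or_lt_of_le hi with h | h
  · rw [← h]; rfl
  · obtain ⟨n, hn⟩ : ∃ n : ℕ, (i+1).toNat = n + 2 := ⟨(i-1).toNat, by omega⟩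
    rw [hn, show ((-1:ℤ)+1).toNat = 0 by rfl, blobbedCAux]

lemma blobbedC_congr {a b a' b' : ℤ} (h1 : a = a') (h2 : b = b') :
    blobbedC a b = blobbedC a' b' := by rw [h1, h2]

lemma blobbedC_key (n : ℕ) : ∀ i : ℤ, (n:ℤ) + 1 ≤ i →
    blobbedC i ((n:ℤ)+1) = ∑ k ∈ Finset.Icc (0 : ℤ) ((n:ℤ)+1),
      blobbedC (i - 1 - k) ((n:ℤ) + 1 + 1 - k) := by
  induction n with
  | zero =>
    intro i hi
    norm_num at hi ⊢
    rw [show Finset.Icc (0:ℤ) 1 = {0, 1} from rfl]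
    rw [Finset.sum_insert (by simp), Finset.sum_singleton]
    have h1 := blobbedC_rec i 1 (by omega) (by omega)
    have h1' : blobbedC (i-1) (1+1) = blobbedC (i-1-0) (2-0) :=
      blobbedC_congr (by ring) (by norm_num)
    have h3 : blobbedC (i-1) (1-1) = blobbedC (i-1-1) (2-1) := by
      rcases eq_or_lt_of_le hi with h | h
      · rw [blobbedC_congr (a := i-1) (a' := (0:ℤ)) (b' := (0:ℤ)) (by omega) (by ring),
          blobbedC_congr (a := i-1-1) (a' := (-1:ℤ)) (b' := (1:ℤ)) (by omega) (by ring)]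
        decide
      · have h4 := blobbedC_rec (i-1) (1-1) (by omega) (by norm_num)
        rw [h4, blobbedC_congr (a := i-1-1) (b := 1-1-1) (a' := i-1-1) (b' := (-1:ℤ))
          rfl (by ring), blobbedC_neg _ (by omega),
          blobbedC_congr (a := i-1-1) (b := 1-1+1) (a' := i-1-1) (b' := (2:ℤ)-1) rfl (by ring)]
        omega
    rw [h1, h1', h3]
    omega
  | succ n ih =>
    intro i hi
    push_cast at hi ⊢
    have h1 := blobbedC_rec i ((n:ℤ)+1+1) (by omega) (by omega)
    have h2 : blobbedC (i-1) ((n:ℤ)+1+1-1) = blobbedC (i-1) ((n:ℤ)+1) :=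
      blobbedC_congr rfl (by ring)
    have hih := ih (i-1) (by omega)
    have hsplit : Finset.Icc (0:ℤ) ((n:ℤ)+1+1) = insert 0 (Finset.Icc 1 ((n:ℤ)+1+1)) := by
      ext k; simp [Finset.mem_Icc]; omega
    have h0 : blobbedC (i-1-0) ((n:ℤ)+1+1+1-0) = blobbedC (i-1) ((n:ℤ)+1+1+1) :=
      blobbedC_congr (by ring) (by ring)
    have hre : ∑ k ∈ Finset.Icc (1:ℤ) ((n:ℤ)+1+1), blobbedC (i - 1 - k) ((n:ℤ)+1+1+1-k)
        = ∑ k ∈ Finset.Icc (0:ℤ) ((n:ℤ)+1), blobbedC (i - 1 - 1 - k) ((n:ℤ)+1+1-k) := by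
      apply Finset.sum_nbij' (fun k => k - 1) (fun k => k + 1) <;>
        simp only [Finset.mem_Icc] <;> intros <;>
        first | omega | (apply blobbedC_congr <;> ring)
    rw [h1, h2, hih, hsplit, Finset.sum_insert (by simp), h0, hre]
    omega

/-- For all integers `1 ≤ j ≤ i`, `C(i,j) = ∑_{k=0}^{j} C(i-1-k, j+1-k)`. -/
theorem blobbedC_diag_sum (i j : ℤ) (hj : 1 ≤ j) (hji : j ≤ i) :
    blobbedC i j = ∑ k ∈ Finset.Icc (0 : ℤ) j, blobbedC (i - 1 - k) (j + 1 - k) := by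
  obtain ⟨n, rfl⟩ : ∃ n : ℕ, j = (n:ℤ) + 1 := ⟨(j-1).toNat, by omega⟩
  exact blobbedC_key n i (by omega)
end

section
/- Let C denote the blobbed Catalan triangle. For all integers i ≥ 1 and j ≥ 1, one has C(i,j) = Σ_{k=0}^{i} C(i−1−k, j−1+k). -/
lemma blobbedCAux_row_sum (m n : ℕ) :
    blobbedCAux (m + 2) (n + 2) = ∑ k ∈ Finset.range (m + 2), blobbedCAux (m + 1 - k) (n + 1 + k) := by
  induction m generalizing n with
  | zero =>
      simp [blobbedCAux, Finset.sum_range_succ]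
      split_ifs <;> omega
  | succ m ih =>
      have ih' : blobbedCAux (m + 2) (n + 3) =
          ∑ k ∈ Finset.range (m + 2), blobbedCAux (m + 1 - k) (n + 2 + k) := ih (n + 1)
      have hrec : blobbedCAux (m + 2 + 1) (n + 2) =
          blobbedCAux (m + 2) (n + 1) + blobbedCAux (m + 2) (n + 3) := rfl
      have hs : ∑ k ∈ Finset.range (m + 2), blobbedCAux (m + 2 - (k + 1)) (n + 1 + (k + 1)) =
          ∑ k ∈ Finset.range (m + 2), blobbedCAux (m + 1 - k) (n + 2 + k) :=
        Finset.sum_congr rfl (fun k _ => by congr 1 <;> omega)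
      simp only [show m + 1 + 2 = m + 2 + 1 from rfl, show m + 1 + 1 = m + 2 from rfl]
      conv_rhs => rw [Finset.sum_range_succ']
      rw [hrec, ih', hs, Nat.sub_zero, Nat.add_zero]
      exact Nat.add_comm _ _

/-- For all integers `i ≥ 1` and `j ≥ 1`, `C(i,j) = ∑_{k=0}^{i} C(i-1-k, j-1+k)`. -/
theorem blobbedC_row_sum (i j : ℤ) (hi : 1 ≤ i) (hj : 1 ≤ j) :
    blobbedC i j = ∑ k ∈ Finset.Icc (0 : ℤ) i, blobbedC (i - 1 - k) (j - 1 + k) := by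
  obtain ⟨m, rfl⟩ : ∃ m : ℕ, i = (m : ℤ) + 1 := ⟨(i - 1).toNat, by omega⟩
  obtain ⟨n, rfl⟩ : ∃ n : ℕ, j = (n : ℤ) + 1 := ⟨(j - 1).toNat, by omega⟩
  have e1 : ((m : ℤ) + 1 + 1).toNat = m + 2 := by omega
  have e2 : ((n : ℤ) + 1 + 1).toNat = n + 2 := by omega
  rw [show blobbedC ((m : ℤ) + 1) ((n : ℤ) + 1)
      = blobbedCAux ((m : ℤ) + 1 + 1).toNat ((n : ℤ) + 1 + 1).toNat from rfl, e1, e2,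
    blobbedCAux_row_sum m n]
  rw [show Finset.Icc (0 : ℤ) ((m : ℤ) + 1)
      = Finset.map ⟨(Nat.cast : ℕ → ℤ), Nat.cast_injective⟩ (Finset.range (m + 2)) from ?_]
  · rw [Finset.sum_map]
    apply Finset.sum_congr rfl
    intro k hk
    simp only [Finset.mem_range] at hk
    simp only [Function.Embedding.coeFn_mk, blobbedC]
    have e3 : ((m : ℤ) + 1 - 1 - (k : ℤ) + 1).toNat = m + 1 - k := by omega
    have e4 : ((n : ℤ) + 1 - 1 + (k : ℤ) + 1).toNat = n + 1 + k := by omega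
    rw [e3, e4]
  · ext x
    simp only [Finset.mem_Icc, Finset.mem_map, Finset.mem_range, Function.Embedding.coeFn_mk]
    constructor
    · rintro ⟨h0, h1⟩
      exact ⟨x.toNat, by omega, by omega⟩
    · rintro ⟨k, hk, rfl⟩
      omega
end

section
/- Let C denote the blobbed Catalan triangle. For all integers i and j with the same parity satisfying 0 ≤ j ≤ i, one has C(i,j) = Σ_{k=(i−j)/2}^{(i+j)/2} binom(i,k), where binom denotes the binomial coefficient. -/
lemma blobbedCAux_two_pow : ∀ i j : ℕ, i ≤ j → i % 2 = j % 2 →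
    blobbedCAux (i + 1) (j + 1) = 2 ^ i := by
  intro i
  induction i with
  | zero =>
    intro j _ hpar
    simp only [blobbedCAux]
    rw [if_pos (by omega), pow_zero]
  | succ i ih =>
    intro j hij hpar
    obtain ⟨j', rfl⟩ : ∃ j', j = j' + 1 := ⟨j - 1, by omega⟩
    show blobbedCAux (i + 2) (j' + 2) = 2 ^ (i + 1)
    rw [show blobbedCAux (i + 2) (j' + 2) =
      blobbedCAux (i + 1) (j' + 1) + blobbedCAux (i + 1) (j' + 3) from rfl,
      ih j' (by omega) (by omega), ih (j' + 2) (by omega) (by omega)]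
    ring

lemma sum_Icc_choose_of_le (i N : ℕ) (h : i ≤ N) :
    ∑ k ∈ Finset.Icc 0 N, i.choose k = 2 ^ i := by
  rw [show Finset.Icc 0 N = Finset.range (N + 1) by
    ext x; simp [Nat.lt_succ_iff]]
  rw [← Nat.sum_range_choose i]
  symm
  apply Finset.sum_subset
  · intro x hx
    simp only [Finset.mem_range] at *
    omega
  · intro x _ hx
    simp only [Finset.mem_range] at hx
    exact Nat.choose_eq_zero_of_lt (by omega)

lemma sum_Icc_shift (f : ℕ → ℕ) (a b : ℕ) :
    ∑ k ∈ Finset.Icc (a + 1) (b + 1), f k = ∑ k ∈ Finset.Icc a b, f (k + 1) := by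
  rw [← Finset.map_add_right_Icc a b 1, Finset.sum_map]
  rfl

lemma sum_Icc_swap (g : ℕ → ℕ) (a b : ℕ) (hab : a ≤ b) :
    ∑ k ∈ Finset.Icc a b, g k + ∑ k ∈ Finset.Icc (a + 1) (b + 1), g k =
    ∑ k ∈ Finset.Icc (a + 1) b, g k + ∑ k ∈ Finset.Icc a (b + 1), g k := by
  rw [Finset.sum_Icc_succ_top (by omega : a + 1 ≤ b + 1),
    Finset.sum_Icc_succ_top (by omega : a ≤ b + 1)]
  ring

lemma blobbedCAux_eq_sum : ∀ i j : ℕ, i % 2 = j % 2 →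
    blobbedCAux (i + 1) (j + 1) =
      ∑ k ∈ Finset.Icc ((i - j) / 2) ((i + j) / 2), i.choose k := by
  intro i
  induction i with
  | zero =>
    intro j hpar
    simp only [blobbedCAux]
    rw [if_pos (by omega), show (0 - j) / 2 = 0 by omega, show (0 + j) / 2 = j / 2 by omega,
      sum_Icc_choose_of_le 0 (j / 2) (by omega)]
    norm_num
  | succ i ih =>
    intro j hpar
    match j with
    | 0 =>
      -- i is odd, i ≥ 1
      obtain ⟨m, rfl⟩ : ∃ m, i = 2 * m + 1 := ⟨i / 2, by omega⟩
      show blobbedCAux (2 * m + 1 + 2) 1 = _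
      simp only [Nat.add_zero, Nat.sub_zero]
      rw [show blobbedCAux (2 * m + 1 + 2) 1 =
        blobbedCAux (2 * m + 1 + 1) 0 + blobbedCAux (2 * m + 1 + 1) 2 from rfl,
        show blobbedCAux (2 * m + 1 + 1) 0 = 0 from rfl,
        ih 1 (by omega)]
      rw [show (2 * m + 1 - 1) / 2 = m by omega]
      rw [show (2 * m + 1 + 1) / 2 = m + 1 by omega]
      rw [Finset.sum_Icc_succ_top (by omega : m ≤ m + 1), Finset.Icc_self,
        Finset.sum_singleton, Finset.Icc_self, Finset.sum_singleton,
        Nat.choose_succ_succ (2 * m + 1) m]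
      simp only [Nat.succ_eq_add_one]
      omega
    | j' + 1 =>
      rw [show blobbedCAux (i + 1 + 1) (j' + 1 + 1) =
        blobbedCAux (i + 1) (j' + 1) + blobbedCAux (i + 1) (j' + 3) from rfl]
      by_cases hij : i ≤ j'
      · -- outside the triangle: value is 2^(i+1)
        have h1 : blobbedCAux (i + 1) (j' + 1) = 2 ^ i :=
          blobbedCAux_two_pow i j' hij (by omega)
        have h2 : blobbedCAux (i + 1) (j' + 3) = 2 ^ i :=
          blobbedCAux_two_pow i (j' + 2) (by omega) (by omega)
        rw [h1, h2, show (i + 1 - (j' + 1)) / 2 = 0 by omega,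
          sum_Icc_choose_of_le (i + 1) ((i + 1 + (j' + 1)) / 2) (by omega)]
        ring
      · -- inside: j' + 2 ≤ i
        obtain ⟨a', ha⟩ : ∃ a', i = j' + 2 * (a' + 1) := ⟨(i - j') / 2 - 1, by omega⟩
        have hb : (i + j') / 2 = j' + a' + 1 := by omega
        set b := j' + a' + 1 with hbdef
        rw [ih j' (by omega), ih (j' + 2) (by omega)]
        rw [show (i - j') / 2 = a' + 1 by omega, show (i - (j' + 2)) / 2 = a' by omega,
          show (i + (j' + 2)) / 2 = b + 1 by omega, hb,
          show (i + 1 - (j' + 1)) / 2 = a' + 1 by omega,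
          show (i + 1 + (j' + 1)) / 2 = b + 1 by omega]
        rw [sum_Icc_shift ((i + 1).choose) a' b]
        simp only [Nat.choose_succ_succ]
        rw [Finset.sum_add_distrib, ← sum_Icc_shift (i.choose) a' b]
        have := sum_Icc_swap (i.choose) a' b (by omega)
        omega

/-- For all integers `i`, `j` of the same parity with `0 ≤ j ≤ i`,
`C(i,j) = ∑_{k=(i-j)/2}^{(i+j)/2} binom(i,k)`. -/
theorem blobbedC_eq_sum_choose (i j : ℤ) (hpar : i % 2 = j % 2) (hj : 0 ≤ j) (hji : j ≤ i) :
    blobbedC i j =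
      ∑ k ∈ Finset.Icc ((i - j) / 2) ((i + j) / 2), (i.toNat).choose k.toNat := by
  obtain ⟨I, rfl⟩ : ∃ I : ℕ, i = (I : ℤ) := ⟨i.toNat, by omega⟩
  obtain ⟨J, rfl⟩ : ∃ J : ℕ, j = (J : ℤ) := ⟨j.toNat, by omega⟩
  have hJI : J ≤ I := by exact_mod_cast hji
  have hpar' : I % 2 = J % 2 := by omega
  have h1 : ((I : ℤ) - J) / 2 = ((I - J) / 2 : ℕ) := by omega
  have h2 : ((I : ℤ) + J) / 2 = ((I + J) / 2 : ℕ) := by omega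
  rw [h1, h2]
  have hC : blobbedC I J = blobbedCAux (I + 1) (J + 1) := by
    unfold blobbedC
    congr 1 <;> omega
  rw [hC, blobbedCAux_eq_sum I J hpar', Int.toNat_natCast]
  refine Finset.sum_nbij' (fun (k : ℕ) => (k : ℤ)) (fun (k : ℤ) => k.toNat) ?_ ?_ ?_ ?_ ?_
  · intro k hk; simp only [Finset.mem_Icc] at *; omega
  · intro k hk; simp only [Finset.mem_Icc] at *; omega
  · intro k _; show ((k : ℤ)).toNat = k; omega
  · intro k hk; simp only [Finset.mem_Icc] at hk; show ((k.toNat : ℤ)) = k; omega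
  · intro k _; rw [Int.toNat_natCast]
end

section
/- Let C denote the blobbed Catalan triangle. For every integer i ≥ 1, one has C(2i,0) = binom(2i,i), the central binomial coefficient. -/
open Finset in
/-- Pascal for partial sums of binomial rows. -/
lemma sum_choose_succ (a M : ℕ) :
    ∑ t ∈ range (M + 1), (a + 1).choose t
      = ∑ t ∈ range (M + 1), a.choose t + ∑ t ∈ range M, a.choose t := by
  induction M with
  | zero => simp
  | succ M ih =>
    rw [sum_range_succ, ih, Nat.choose_succ_succ,
      sum_range_succ a.choose (M + 1), sum_range_succ a.choose M]
    ring

open Finset in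
lemma key : ∀ a b : ℕ, a % 2 = b % 2 →
    blobbedCAux (a + 1) (b + 1) + 2 ^ a
      = 2 * ∑ t ∈ range ((a + b) / 2 + 1), a.choose t := by
  intro a
  induction a with
  | zero =>
    intro b hb
    have hbo : (b + 1) % 2 = 1 := by omega
    simp only [blobbedCAux, hbo]
    have h1 : ∀ t ∈ range ((0 + b) / 2 + 1), Nat.choose 0 t = if t = 0 then 1 else 0 := by
      intro t _
      cases t <;> simp
    rw [Finset.sum_congr rfl h1]
    simp
  | succ a ih =>
    intro b hb
    have hp : (2 : ℕ) ^ (a + 1) = 2 * 2 ^ a := by ring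
    match b with
    | 0 =>
      -- here a is odd
      obtain ⟨m, hm⟩ : ∃ m, a = 2 * m + 1 := ⟨a / 2, by omega⟩
      have hz : blobbedCAux (a + 1) 0 = 0 := by
        rw [show a + 1 = (a - 1) + 2 from by omega]
        rfl
      have hrec : blobbedCAux (a + 2) 1 = blobbedCAux (a + 1) 0 + blobbedCAux (a + 1) 2 := rfl
      have hIH : blobbedCAux (a + 1) 2 + 2 ^ a
          = 2 * ∑ t ∈ range (m + 2), a.choose t := by
        have h := ih 1 (by omega)
        rwa [show (a + 1) / 2 + 1 = m + 2 from by omega] at h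
      have hps : ∑ t ∈ range (m + 2), (a + 1).choose t
          = ∑ t ∈ range (m + 2), a.choose t + ∑ t ∈ range (m + 1), a.choose t :=
        sum_choose_succ a (m + 1)
      have hhalf : ∑ t ∈ range (m + 1), a.choose t = 4 ^ m := by
        rw [hm]; exact Nat.sum_range_choose_halfway m
      have hpow : (2 : ℕ) ^ a = 2 * 4 ^ m := by
        rw [hm, show (4 : ℕ) ^ m = 2 ^ (2 * m) from by rw [pow_mul]; norm_num]
        ring
      show blobbedCAux (a + 2) 1 + 2 ^ (a + 1)
        = 2 * ∑ t ∈ range ((a + 1 + 0) / 2 + 1), (a + 1).choose t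
      rw [show (a + 1 + 0) / 2 + 1 = m + 2 from by omega]
      omega
    | b' + 1 =>
      have hrec : blobbedCAux (a + 2) (b' + 2)
          = blobbedCAux (a + 1) (b' + 1) + blobbedCAux (a + 1) (b' + 3) := rfl
      have h1 := ih b' (by omega)
      have h2 : blobbedCAux (a + 1) (b' + 3) + 2 ^ a
          = 2 * ∑ t ∈ range ((a + b') / 2 + 2), a.choose t := by
        have h := ih (b' + 2) (by omega)
        rwa [show (a + (b' + 2)) / 2 + 1 = (a + b') / 2 + 2 from by omega] at h
      have hps : ∑ t ∈ range ((a + b') / 2 + 2), (a + 1).choose t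
          = ∑ t ∈ range ((a + b') / 2 + 2), a.choose t
            + ∑ t ∈ range ((a + b') / 2 + 1), a.choose t :=
        sum_choose_succ a ((a + b') / 2 + 1)
      show blobbedCAux (a + 2) (b' + 2) + 2 ^ (a + 1)
        = 2 * ∑ t ∈ range ((a + 1 + (b' + 1)) / 2 + 1), (a + 1).choose t
      rw [show (a + 1 + (b' + 1)) / 2 + 1 = (a + b') / 2 + 2 from by omega]
      omega

open Finset in
lemma central_sum (i : ℕ) :
    2 * ∑ t ∈ range (i + 1), (2 * i).choose t = 2 ^ (2 * i) + (2 * i).choose i := by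
  have hfull : ∑ t ∈ range (i + 1 + i), (2 * i).choose t = 2 ^ (2 * i) := by
    rw [show i + 1 + i = 2 * i + 1 from by omega]
    exact Nat.sum_range_choose (2 * i)
  have hsplit : ∑ t ∈ range (i + 1 + i), (2 * i).choose t
      = ∑ t ∈ range (i + 1), (2 * i).choose t + ∑ t ∈ range i, (2 * i).choose (i + 1 + t) :=
    Finset.sum_range_add _ _ _
  have hrefl : ∑ t ∈ range i, (2 * i).choose (i + 1 + t)
      = ∑ t ∈ range i, (2 * i).choose t := by
    rw [← Finset.sum_range_reflect]
    apply Finset.sum_congr rfl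
    intro t ht
    simp only [Finset.mem_range] at ht
    rw [← Nat.choose_symm (by omega : i + 1 + (i - 1 - t) ≤ 2 * i)]
    congr 1
    omega
  have hlast : ∑ t ∈ range (i + 1), (2 * i).choose t
      = ∑ t ∈ range i, (2 * i).choose t + (2 * i).choose i :=
    Finset.sum_range_succ _ _
  omega

/-- For every integer `i ≥ 1`, `C(2i,0)` is the central binomial coefficient `binom(2i,i)`. -/
theorem blobbedC_central_binom (i : ℕ) (hi : 1 ≤ i) :
    blobbedC (2 * (i : ℤ)) 0 = (2 * i).choose i := by
  have h1 : blobbedC (2 * (i : ℤ)) 0 = blobbedCAux (2 * i + 1) 1 := by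
    unfold blobbedC
    congr 1
  have h2 : blobbedCAux (2 * i + 1) 1 + 2 ^ (2 * i)
      = 2 * ∑ t ∈ Finset.range (i + 1), (2 * i).choose t := by
    have h := key (2 * i) 0 (by omega)
    rwa [show (2 * i + 0) / 2 + 1 = i + 1 from by omega] at h
  have h3 := central_sum i
  rw [h1]
  omega
end

section
/- Let C denote the blobbed Catalan triangle. For all integers i and j with the same parity satisfying 0 ≤ i ≤ j, one has C(i,j) = 2^i. (In particular, all entries of the blobbed Catalan triangle on or above the main diagonal are powers of 2, and C(i,i) = 2^i.) -/
lemma blobbedCAux_diag : ∀ (i j : ℕ), i ≤ j → i % 2 = j % 2 →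
    blobbedCAux (i + 1) (j + 1) = 2 ^ i := by
  intro i
  induction i with
  | zero =>
    intro j hij hpar
    simp only [blobbedCAux]
    have : (j + 1) % 2 = 1 := by omega
    simp [this]
  | succ n ih =>
    intro j hij hpar
    obtain ⟨k, rfl⟩ : ∃ k, j = k + 1 := ⟨j - 1, by omega⟩
    show blobbedCAux (n + 2) (k + 2) = 2 ^ (n + 1)
    rw [show blobbedCAux (n + 2) (k + 2) =
        blobbedCAux (n + 1) (k + 1) + blobbedCAux (n + 1) (k + 3) from rfl]
    rw [ih k (by omega) (by omega),
        show k + 3 = (k + 2) + 1 from rfl, ih (k + 2) (by omega) (by omega)]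
    ring

/-- For all integers `i`, `j` of the same parity with `0 ≤ i ≤ j`, `C(i,j) = 2^i`.
In particular `C(i,i) = 2^i`. -/
theorem blobbedC_above_diag (i j : ℤ) (hpar : i % 2 = j % 2) (hi : 0 ≤ i) (hij : i ≤ j) :
    blobbedC i j = 2 ^ i.toNat := by
  have h1 : (i + 1).toNat = i.toNat + 1 := by omega
  have h2 : (j + 1).toNat = j.toNat + 1 := by omega
  rw [blobbedC, h1, h2]
  exact blobbedCAux_diag i.toNat j.toNat (by omega) (by omega)
end

section
/- Let c denote Forder's Catalan triangle. For every integer i ≥ 1, the central binomial coefficient satisfies binom(2i,i) = Σ_{k=1}^{i} 2^k · c(2i−k−1, k−1). -/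
/-- Auxiliary (index-shifted) version of Forder's Catalan triangle:
`forderCAux (i+1) (j+1) = c(i,j)`. -/
def forderCAux : ℕ → ℕ → ℕ
  | 0, 0 => 1
  | 0, _ + 1 => 0
  | _ + 1, 0 => 0
  | i + 1, j + 1 => forderCAux i j + forderCAux i (j + 2)

/-- Forder's Catalan triangle `c(i,j)`, defined for integers `i, j ≥ -1`:
`c(-1,-1) = 1`, `c(-1,j) = 0` for `j ≥ 0`, `c(i,-1) = 0` for `i ≥ 0`, and
`c(i,j) = c(i-1,j-1) + c(i-1,j+1)` for `i, j ≥ 0`. -/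
def forderC (i j : ℤ) : ℕ := forderCAux (i + 1).toNat (j + 1).toNat

lemma forderCAux_key : ∀ n k m : ℕ, n + k = 2 * (m + 1) → 1 ≤ n →
    forderCAux n k + (n - 1).choose (m + 1) = (n - 1).choose m := by
  intro n
  induction n with
  | zero => intro k m h hn; omega
  | succ n ih =>
    intro k m h _
    match k with
    | 0 =>
      have hn : n = 2 * m + 1 := by omega
      show forderCAux (n + 1) 0 + n.choose (m + 1) = n.choose m
      have h0 : forderCAux (n + 1) 0 = 0 := rfl
      rw [h0, zero_add, hn]
      have hs := Nat.choose_symm (n := 2 * m + 1) (k := m) (by omega)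
      rw [show 2 * m + 1 - m = m + 1 by omega] at hs
      exact hs
    | j + 1 =>
      show forderCAux n j + forderCAux n (j + 2) + n.choose (m + 1) = n.choose m
      rcases Nat.eq_zero_or_pos n with h0 | hpos
      · subst h0
        have hj : j = 2 * m := by omega
        subst hj
        match m with
        | 0 => simp [forderCAux]
        | m + 1 =>
          have e1 : forderCAux 0 (2 * (m + 1)) = 0 := by
            show forderCAux 0 (2 * m + 2) = 0
            rfl
          have e2 : forderCAux 0 (2 * (m + 1) + 2) = 0 := rfl
          rw [e1, e2]
          simp [Nat.choose_eq_zero_of_lt]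
      · match m with
        | 0 => omega
        | m + 1 =>
          obtain ⟨p, rfl⟩ : ∃ p, n = p + 1 := ⟨n - 1, by omega⟩
          have h1 := ih j m (by omega) (by omega)
          have h2 := ih (j + 2) (m + 1) (by omega) (by omega)
          simp only [Nat.add_sub_cancel] at h1 h2 ⊢
          have hp1 := Nat.choose_succ_succ p (m + 1)
          have hp2 := Nat.choose_succ_succ p m
          simp only [Nat.succ_eq_add_one] at hp1 hp2
          omega

lemma tel (i : ℕ) (f g : ℕ → ℕ) (hi : 1 ≤ i)
    (h : ∀ k, 1 ≤ k → k ≤ i → g k + f (k + 1) = f k) :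
    (∑ k ∈ Finset.Icc 1 i, g k) + f (i + 1) = f 1 := by
  induction i with
  | zero => omega
  | succ n ih =>
    rcases Nat.eq_zero_or_pos n with rfl | hn
    · simpa using h 1 le_rfl le_rfl
    · rw [Finset.sum_Icc_succ_top (by omega)]
      have hh := h (n + 1) (by omega) le_rfl
      have := ih hn (fun k h1 h2 => h k h1 (by omega))
      omega

/-- For every integer `i ≥ 1`,
`binom(2i,i) = ∑_{k=1}^{i} 2^k · c(2i-k-1, k-1)`. -/
theorem central_binom_eq_sum_forder (i : ℕ) (hi : 1 ≤ i) :
    (2 * i).choose i =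
      ∑ k ∈ Finset.Icc 1 i, 2 ^ k * forderC (2 * (i : ℤ) - k - 1) ((k : ℤ) - 1) := by
  -- rewrite terms as forderCAux (2i - k) k
  have hsum : ∑ k ∈ Finset.Icc 1 i, 2 ^ k * forderC (2 * (i : ℤ) - k - 1) ((k : ℤ) - 1)
      = ∑ k ∈ Finset.Icc 1 i, 2 ^ k * forderCAux (2 * i - k) k := by
    refine Finset.sum_congr rfl (fun k hk => ?_)
    rw [Finset.mem_Icc] at hk
    unfold forderC
    have e1 : (2 * (i : ℤ) - k - 1 + 1).toNat = 2 * i - k := by omega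
    have e2 : ((k : ℤ) - 1 + 1).toNat = k := by omega
    rw [e1, e2]
  rw [hsum]
  set f : ℕ → ℕ := fun k =>
    if k ≤ i then 2 ^ k * ((2 * i - k - 1).choose (i - 1) + (2 * i - k - 1).choose i) else 0
    with hf
  have h : ∀ k, 1 ≤ k → k ≤ i →
      2 ^ k * forderCAux (2 * i - k) k + f (k + 1) = f k := by
    intro k hk1 hk2
    rcases eq_or_lt_of_le hk2 with rfl | hlt
    · -- k = i
      have hkey := forderCAux_key (2 * k - k) k (k - 1) (by omega) (by omega)
      rw [show k - 1 + 1 = k by omega] at hkey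
      have hz : (2 * k - k - 1).choose k = 0 := Nat.choose_eq_zero_of_lt (by omega)
      rw [hz] at hkey
      have ha : forderCAux (2 * k - k) k = 1 := by
        have : (2 * k - k - 1).choose (k - 1) = 1 := by
          rw [show 2 * k - k - 1 = k - 1 by omega]; exact Nat.choose_self _
        omega
      have hfk1 : f (k + 1) = 0 := by
        rw [hf]; simp only [if_neg (by omega : ¬ k + 1 ≤ k)]
      have hone : (2 * k - k - 1).choose (k - 1) = 1 := by
        rw [show 2 * k - k - 1 = k - 1 by omega]; exact Nat.choose_self _
      have hfk : f k = 2 ^ k := by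
        rw [hf]; simp only [if_pos (le_refl k), hz, hone]; ring
      rw [ha, hfk1, hfk]
      ring
    · -- k < i
      have hkey := forderCAux_key (2 * i - k) k (i - 1) (by omega) (by omega)
      rw [show i - 1 + 1 = i by omega] at hkey
      have hP : (2 * i - k - 1).choose i
          = (2 * i - (k + 1) - 1).choose (i - 1) + (2 * i - (k + 1) - 1).choose i := by
        have := Nat.choose_succ_succ (2 * i - (k + 1) - 1) (i - 1)
        simp only [Nat.succ_eq_add_one] at this
        rw [show 2 * i - (k + 1) - 1 + 1 = 2 * i - k - 1 by omega,
          show i - 1 + 1 = i by omega] at this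
        exact this
      simp only [hf, if_pos (by omega : k + 1 ≤ i), if_pos (le_of_lt hlt)]
      have key2 : forderCAux (2 * i - k) k
          + 2 * ((2 * i - (k + 1) - 1).choose (i - 1) + (2 * i - (k + 1) - 1).choose i)
          = (2 * i - k - 1).choose (i - 1) + (2 * i - k - 1).choose i := by
        omega
      calc 2 ^ k * forderCAux (2 * i - k) k
            + 2 ^ (k + 1) * ((2 * i - (k + 1) - 1).choose (i - 1)
              + (2 * i - (k + 1) - 1).choose i)
          = 2 ^ k * (forderCAux (2 * i - k) k
            + 2 * ((2 * i - (k + 1) - 1).choose (i - 1) + (2 * i - (k + 1) - 1).choose i)) := by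
            ring
        _ = _ := by rw [key2]
  have htel : (∑ k ∈ Finset.Icc 1 i, 2 ^ k * forderCAux (2 * i - k) k) + f (i + 1) = f 1 :=
    tel i f (fun k => 2 ^ k * forderCAux (2 * i - k) k) hi h
  have hfi : f (i + 1) = 0 := by
    rw [hf]; simp only [if_neg (by omega : ¬ i + 1 ≤ i)]
  have hf1 : f 1 = 2 * ((2 * i - 2).choose (i - 1) + (2 * i - 2).choose i) := by
    rw [hf]; simp only [if_pos hi]
    rw [show 2 * i - 1 - 1 = 2 * i - 2 by omega]
    ring
  -- central binomial computation
  have hP1 : (2 * i - 1).choose i = (2 * i - 2).choose (i - 1) + (2 * i - 2).choose i := by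
    have := Nat.choose_succ_succ (2 * i - 2) (i - 1)
    simp only [Nat.succ_eq_add_one] at this
    rw [show 2 * i - 2 + 1 = 2 * i - 1 by omega, show i - 1 + 1 = i by omega] at this
    exact this
  have hP2 : (2 * i).choose i = (2 * i - 1).choose (i - 1) + (2 * i - 1).choose i := by
    have := Nat.choose_succ_succ (2 * i - 1) (i - 1)
    simp only [Nat.succ_eq_add_one] at this
    rw [show 2 * i - 1 + 1 = 2 * i by omega, show i - 1 + 1 = i by omega] at this
    exact this
  have hsymm : (2 * i - 1).choose (i - 1) = (2 * i - 1).choose i := by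
    have := Nat.choose_symm (n := 2 * i - 1) (k := i) (by omega)
    rw [show 2 * i - 1 - i = i - 1 by omega] at this
    exact this
  omega
end

section
/- Let c denote Forder's Catalan triangle. For all integers i and j with 1 ≤ j ≤ i, one has binom(2i−j, i) = Σ_{k=1}^{i−j+1} 2^{k−1} · c(2i−k−j, j+k−2). (Thus every binomial coefficient is a 2-power weighted sum of entries of the Catalan triangle.) -/
lemma forderCAux_succ (a b : ℕ) :
    forderCAux (a + 1) (b + 1) = forderCAux a b + forderCAux a (b + 2) := rfl

lemma forderCAux_eq_zero : ∀ a b : ℕ, a < b → forderCAux a b = 0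
  | 0, _ + 1, _ => rfl
  | a + 1, b + 1, h => by
    rw [forderCAux_succ, forderCAux_eq_zero a b (by omega),
      forderCAux_eq_zero a (b + 2) (by omega)]

lemma forderCAux_diag : ∀ a : ℕ, forderCAux a a = 1
  | 0 => rfl
  | a + 1 => by
    rw [forderCAux_succ, forderCAux_diag a, forderCAux_eq_zero a (a + 2) (by omega)]

lemma central (m : ℕ) : (2 * (m + 1)).choose (m + 1) = 2 * (2 * m + 1).choose (m + 1) := by
  have h2 : (2 * m + 1).choose m = (2 * m + 1).choose (m + 1) := by
    have := Nat.choose_symm (n := 2 * m + 1) (k := m + 1) (by omega)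
    rwa [show 2 * m + 1 - (m + 1) = m from by omega] at this
  calc (2 * (m + 1)).choose (m + 1) = ((2 * m + 1) + 1).choose (m + 1) := by
        congr 1
    _ = (2 * m + 1).choose m + (2 * m + 1).choose (m + 1) := Nat.choose_succ_succ _ _
    _ = 2 * (2 * m + 1).choose (m + 1) := by rw [h2]; ring

lemma keyNat : ∀ n i j : ℕ, 2 * i - j = n → 1 ≤ j → j ≤ i →
    (2 * i - j).choose i
      = ∑ k ∈ Finset.range (i - j + 1), 2 ^ k * forderCAux (2 * i - j - k) (j + k) := by
  intro n
  induction n using Nat.strong_induction_on with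
  | _ n ih =>
  intro i j hn hj hji
  rcases eq_or_lt_of_le hji with rfl | hlt
  · rw [show j - j + 1 = 1 from by omega, Finset.sum_range_one,
      show 2 * j - j - 0 = j from by omega, Nat.add_zero, forderCAux_diag,
      show 2 * j - j = j from by omega, Nat.choose_self, pow_zero, one_mul]
  · -- j < i
    have h2 : ∀ k ∈ Finset.range (i - j + 1),
        2 ^ k * forderCAux (2 * i - j - k) (j + k)
          = 2 ^ k * forderCAux (2 * i - j - k - 1) (j + k - 1)
            + 2 ^ k * forderCAux (2 * i - j - k - 1) (j + k + 1) := by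
      intro k hk
      simp only [Finset.mem_range] at hk
      rw [show 2 * i - j - k = (2 * i - j - k - 1) + 1 from by omega,
        show j + k = (j + k - 1) + 1 from by omega, forderCAux_succ,
        show j + k - 1 + 2 = j + k + 1 from by omega, mul_add]
      congr 3 <;> omega
    rw [Finset.sum_congr rfl h2, Finset.sum_add_distrib]
    have hS2 : ∑ k ∈ Finset.range (i - j + 1),
        2 ^ k * forderCAux (2 * i - j - k - 1) (j + k + 1)
          = (2 * i - (j + 1)).choose i := by
      rw [Finset.sum_range_succ, forderCAux_eq_zero _ _ (by omega), mul_zero, add_zero,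
        ih (2 * i - (j + 1)) (by omega) i (j + 1) rfl (by omega) (by omega)]
      apply Finset.sum_congr (by rw [show i - (j + 1) + 1 = i - j from by omega])
      intro k hk
      simp only [Finset.mem_range] at hk
      congr 2 <;> omega
    have hS1 : ∑ k ∈ Finset.range (i - j + 1),
        2 ^ k * forderCAux (2 * i - j - k - 1) (j + k - 1)
          = (2 * i - j - 1).choose (i - 1) := by
      rcases Nat.lt_or_ge 1 j with hj2 | hj1
      · have hIH := ih (2 * (i - 1) - (j - 1)) (by omega) (i - 1) (j - 1) rfl
          (by omega) (by omega)
        rw [show 2 * (i - 1) - (j - 1) = 2 * i - j - 1 from by omega] at hIH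
        rw [hIH]
        apply Finset.sum_congr (by rw [show i - 1 - (j - 1) + 1 = i - j + 1 from by omega])
        intro k hk
        simp only [Finset.mem_range] at hk
        congr 2 <;> omega
      · have hj1' : j = 1 := by omega
        subst hj1'
        have hi2 : 2 ≤ i := by omega
        rw [Finset.sum_range_succ']
        rw [show 2 * i - 1 - 0 - 1 = (2 * i - 3) + 1 from by omega]
        rw [show (1 : ℕ) + 0 - 1 = 0 from by omega]
        have hz : forderCAux (2 * i - 3 + 1) 0 = 0 := rfl
        rw [hz, pow_zero, one_mul, add_zero]
        have hIH := ih (2 * (i - 1) - 1) (by omega) (i - 1) 1 rfl (by omega) (by omega)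
        have hsum : ∑ k ∈ Finset.range (i - 1),
            2 ^ (k + 1) * forderCAux (2 * i - 1 - (k + 1) - 1) (1 + (k + 1) - 1)
            = 2 * ∑ k ∈ Finset.range (i - 1 - 1 + 1),
                2 ^ k * forderCAux (2 * (i - 1) - 1 - k) (1 + k) := by
          rw [Finset.mul_sum]
          apply Finset.sum_congr (by rw [show i - 1 - 1 + 1 = i - 1 from by omega])
          intro k hk
          simp only [Finset.mem_range] at hk
          rw [pow_succ]
          rw [show 2 * i - 1 - (k + 1) - 1 = 2 * (i - 1) - 1 - k from by omega,
            show 1 + (k + 1) - 1 = 1 + k from by omega]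
          ring
        rw [hsum, ← hIH]
        calc 2 * (2 * (i - 1) - 1).choose (i - 1)
            = 2 * (2 * (i - 2) + 1).choose (i - 2 + 1) := by congr 2 <;> omega
          _ = (2 * (i - 2 + 1)).choose (i - 2 + 1) := (central (i - 2)).symm
          _ = (2 * i - 1 - 1).choose (i - 1) := by congr 1 <;> omega
    rw [hS1, hS2]
    calc (2 * i - j).choose i = ((2 * i - j - 1) + 1).choose ((i - 1) + 1) := by
          congr 1 <;> omega
      _ = (2 * i - j - 1).choose (i - 1) + (2 * i - j - 1).choose ((i - 1) + 1) :=
          Nat.choose_succ_succ _ _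
      _ = (2 * i - j - 1).choose (i - 1) + (2 * i - (j + 1)).choose i := by
          congr 2 <;> omega

/-- For all integers `1 ≤ j ≤ i`,
`binom(2i-j, i) = ∑_{k=1}^{i-j+1} 2^{k-1} · c(2i-k-j, j+k-2)`. -/
theorem choose_eq_sum_forder (i j : ℕ) (hj : 1 ≤ j) (hji : j ≤ i) :
    (2 * i - j).choose i =
      ∑ k ∈ Finset.Icc 1 (i - j + 1),
        2 ^ (k - 1) * forderC (2 * (i : ℤ) - k - j) ((j : ℤ) + k - 2) := by
  rw [← Finset.Ico_add_one_right_eq_Icc, Finset.sum_Ico_eq_sum_range,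
    show i - j + 1 + 1 - 1 = i - j + 1 from by omega]
  rw [keyNat (2 * i - j) i j rfl hj hji]
  apply Finset.sum_congr rfl
  intro k hk
  simp only [Finset.mem_range] at hk
  unfold forderC
  have e1 : ((2 * (i : ℤ) - ↑(1 + k) - ↑j) + 1).toNat = 2 * i - j - k := by
    push_cast
    omega
  have e2 : (((j : ℤ) + ↑(1 + k) - 2) + 1).toNat = j + k := by
    push_cast
    omega
  rw [e1, e2, show 1 + k - 1 = k from by omega]
end

section
/- For every integer n ≥ 1, the number of positive normal forms on n of affine length 0 equals binom(2n,n). (Equivalently, the number of positive fully commutative elements in the Coxeter group of type B_n is binom(2n,n).) -/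
/-- `w` is a positive normal form on `n`: a sequence of blocks `(l_i, r_i)` with
`n ≥ l_1 ≥ … ≥ l_k ≥ 0`, `n ≥ r_1 ≥ … ≥ r_k ≥ 0`, `l_i ≤ r_i` for all `i`,
where `l` may repeat (consecutively) only at the value `0` and `r` may repeat only
at the value `n`. -/
def IsPNF (n : ℤ) (w : List (ℤ × ℤ)) : Prop :=
  (∀ p ∈ w, 0 ≤ p.1 ∧ p.1 ≤ p.2 ∧ p.2 ≤ n) ∧
  List.Chain' (fun p q : ℤ × ℤ =>
    q.1 ≤ p.1 ∧ q.2 ≤ p.2 ∧ (q.1 = p.1 → p.1 = 0) ∧ (q.2 = p.2 → p.2 = n)) w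

/-- The affine length of a normal form: the number of blocks whose right endpoint is `n`. -/
def affineLength (n : ℤ) (w : List (ℤ × ℤ)) : ℕ :=
  w.countP (fun p => p.2 = n)

/-- `numPNF n s` is the number `a(n,s)` of positive normal forms on `n` of affine length `s`. -/
noncomputable def numPNF (n : ℤ) (s : ℕ) : ℕ :=
  Nat.card {w : List (ℤ × ℤ) // IsPNF n w ∧ affineLength n w = s}


def Psi (t r : ℕ) : ℕ := ∑ u ∈ Finset.Icc t r, (r + t).choose u

lemma psi_pascal {p r : ℕ} (hpr : p ≤ r) :
    Psi (p + 1) (r + 1) = Psi p (r + 1) + Psi (p + 1) r := by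
  set m := r + p + 1 with hm
  have h1 : Psi (p + 1) (r + 1) =
      ∑ v ∈ Finset.Icc p r, (m.choose v + m.choose (v + 1)) := by
    rw [Psi]
    have : (r + 1) + (p + 1) = m + 1 := by omega
    rw [this]
    rw [← Finset.map_add_right_Icc p r 1, Finset.sum_map]
    simp [addRightEmbedding, Nat.choose_succ_succ]
  have h2 : ∑ v ∈ Finset.Icc p r, m.choose (v + 1)
      = ∑ u ∈ Finset.Icc (p+1) (r+1), m.choose u := by
    rw [← Finset.map_add_right_Icc p r 1, Finset.sum_map]
    simp [addRightEmbedding]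
  have h3 : ∑ u ∈ Finset.Icc (p+1) (r+1), m.choose u
      = ∑ u ∈ Finset.Icc (p+1) r, m.choose u + m.choose (r+1) :=
    Finset.sum_Icc_succ_top (by omega) _
  have h4 : Psi p (r + 1) = ∑ u ∈ Finset.Icc p r, m.choose u + m.choose (r+1) := by
    rw [Psi]
    have : (r + 1) + p = m := by omega
    rw [this]
    exact Finset.sum_Icc_succ_top (by omega) _
  have h5 : Psi (p + 1) r = ∑ u ∈ Finset.Icc (p+1) r, m.choose u := by
    rw [Psi]
    have : r + (p + 1) = m := by omega
    rw [this]
  rw [h1, Finset.sum_add_distrib, h2, h3, h4, h5]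
  ring

lemma psi_zero (r : ℕ) : Psi 0 r = 2 ^ r := by
  have h : Finset.Icc 0 r = Finset.range (r + 1) := by
    ext u; simp [Nat.lt_succ_iff]
  rw [Psi, h]
  simpa using Nat.sum_range_choose r

lemma psi_delta {p r : ℕ} (hpr : p ≤ r) :
    Psi p (r + 1) = Psi p r + ∑ l ∈ Finset.range (p + 1), Psi (l - 1) r := by
  induction p with
  | zero => simp [psi_zero]; ring
  | succ p IH =>
      have hp : p ≤ r := Nat.le_of_succ_le hpr
      have hR : ∑ l ∈ Finset.range (p + 1 + 1), Psi (l - 1) r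
          = ∑ l ∈ Finset.range (p + 1), Psi (l - 1) r + Psi p r := by
        rw [Finset.sum_range_succ]; simp
      rw [psi_pascal hp, IH hp, hR]
      omega

lemma psi_lucky (r : ℕ) : Psi (r + 1) (r + 1) = Psi r (r + 1) := by
  have h1 : Psi (r + 1) (r + 1) = (2 * r + 2).choose (r + 1) := by
    rw [Psi]
    rw [Finset.Icc_self, Finset.sum_singleton]
    congr 1; omega
  have h2 : Psi r (r + 1) = (2 * r + 1).choose r + (2 * r + 1).choose (r + 1) := by
    rw [Psi]
    have : Finset.Icc r (r + 1) = {r, r + 1} := by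
      ext u; simp [Finset.mem_Icc]; omega
    rw [this, Finset.sum_insert (by simp), Finset.sum_singleton]
    have : r + 1 + r = 2 * r + 1 := by omega
    rw [this]
  rw [h1, h2]
  have : 2 * r + 2 = (2 * r + 1) + 1 := by omega
  rw [this, Nat.choose_succ_succ' (2 * r + 1) r]

lemma psi_main : ∀ (r0 p : ℕ), p ≤ r0 →
    Psi p r0 = 1 + ∑ r ∈ Finset.range r0, ∑ l ∈ Finset.range (min p r + 1), Psi (l - 1) r := by
  intro r0
  induction r0 with
  | zero =>
      intro p hp
      interval_cases p
      simp [Psi]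
  | succ r0 IH =>
      intro p hp
      rcases Nat.lt_or_ge p (r0 + 1) with hlt | hge
      · -- p ≤ r0
        have hp0 : p ≤ r0 := by omega
        rw [Finset.sum_range_succ]
        have hmin : min p r0 = p := by omega
        rw [hmin, psi_delta hp0, IH p hp0]
        ring
      · -- p = r0 + 1
        have hpe : p = r0 + 1 := by omega
        subst hpe
        have hcongr : ∑ r ∈ Finset.range (r0+1), ∑ l ∈ Finset.range (min (r0+1) r + 1), Psi (l - 1) r
            = ∑ r ∈ Finset.range (r0+1), ∑ l ∈ Finset.range (min r0 r + 1), Psi (l - 1) r := by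
          apply Finset.sum_congr rfl
          intro r hr
          have : min (r0+1) r = min r0 r := by
            simp only [Finset.mem_range] at hr; omega
          rw [this]
        rw [hcongr, psi_lucky]
        -- now goal : Psi r0 (r0+1) = 1 + Σ ... : this is the p ≤ r0 case with p := r0
        rw [Finset.sum_range_succ]
        have hmin : min r0 r0 = r0 := by omega
        rw [hmin, psi_delta (le_refl r0), IH r0 (le_refl r0)]
        ring


def relQ (q p : ℤ × ℤ) : Prop := p.1 ≤ q.1 ∧ p.2 < q.2 ∧ (p.1 = q.1 → q.1 = 0)

def Qc (b : ℤ × ℤ) (w : List (ℤ × ℤ)) : Prop :=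
  (∀ p ∈ w, 0 ≤ p.1 ∧ p.1 ≤ p.2) ∧ List.Chain relQ b w

def idx (p r0 : ℕ) : Finset ((_ : ℕ) × ℕ) :=
  (Finset.range r0).sigma (fun r => Finset.range (min p r + 1))

def W : ℕ → ℕ → Finset (List (ℤ × ℤ))
  | l0, r0 =>
    {[]} ∪ (idx (l0 - 1) r0).attach.biUnion
      (fun x => (W x.1.2 x.1.1).image (List.cons ((x.1.2 : ℤ), (x.1.1 : ℤ))))
  termination_by l0 r0 => r0
  decreasing_by
    have h := x.2
    simp only [idx, Finset.mem_sigma, Finset.mem_range] at h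
    exact h.1

lemma mem_W : ∀ (r0 l0 : ℕ) (w : List (ℤ × ℤ)),
    w ∈ W l0 r0 ↔ Qc ((l0 : ℤ), (r0 : ℤ)) w := by
  intro r0
  induction r0 using Nat.strong_induction_on with
  | _ r0 IH =>
    intro l0 w
    rw [W]
    constructor
    · intro hw
      rcases Finset.mem_union.mp hw with h | h
      · rw [Finset.mem_singleton.mp h]
        exact ⟨by simp, List.Chain.nil⟩
      · rw [Finset.mem_biUnion] at h
        obtain ⟨x, -, hx⟩ := h
        rw [Finset.mem_image] at hx
        obtain ⟨w', hw', rfl⟩ := hx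
        have hxm := x.2
        simp only [idx, Finset.mem_sigma, Finset.mem_range, Nat.lt_succ_iff] at hxm
        obtain ⟨hr, hl⟩ := hxm
        have hQ : Qc ((x.1.2 : ℤ), (x.1.1 : ℤ)) w' := (IH x.1.1 hr x.1.2 w').mp hw'
        refine ⟨?_, ?_⟩
        · intro p hp
          rcases List.mem_cons.mp hp with rfl | hp
          · constructor
            · show (0 : ℤ) ≤ (x.1.2 : ℤ)
              positivity
            · show ((x.1.2 : ℕ) : ℤ) ≤ ((x.1.1 : ℕ) : ℤ)
              exact_mod_cast (le_min_iff.mp hl).2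
          · exact hQ.1 p hp
        · refine List.Chain.cons ?_ hQ.2
          refine ⟨?_, ?_, ?_⟩
          · show ((x.1.2 : ℕ) : ℤ) ≤ ((l0 : ℕ) : ℤ)
            have h1 : x.1.2 ≤ l0 - 1 := (le_min_iff.mp hl).1
            have : x.1.2 ≤ l0 := by omega
            exact_mod_cast this
          · show ((x.1.1 : ℕ) : ℤ) < ((r0 : ℕ) : ℤ)
            exact_mod_cast hr
          · intro he
            show ((l0 : ℕ) : ℤ) = 0
            have he2 : ((x.1.2 : ℕ) : ℤ) = ((l0 : ℕ) : ℤ) := he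
            have he' : x.1.2 = l0 := by exact_mod_cast he2
            have h1 : x.1.2 ≤ l0 - 1 := (le_min_iff.mp hl).1
            have : l0 = 0 := by omega
            exact_mod_cast this
    · intro hQ
      rcases w with _ | ⟨p, w'⟩
      · exact Finset.mem_union_left _ (Finset.mem_singleton_self _)
      · obtain ⟨hb, hc⟩ := hQ
        rcases List.chain_cons.mp hc with ⟨hrel, hchain⟩
        obtain ⟨hp1, hp2, hp3⟩ := hrel
        obtain ⟨hq1, hq2⟩ := hb p (List.mem_cons_self)
        set l := p.1.toNat with hldef
        set r := p.2.toNat with hrdef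
        have hl' : (l : ℤ) = p.1 := Int.toNat_of_nonneg hq1
        have hr' : (r : ℤ) = p.2 := Int.toNat_of_nonneg (le_trans hq1 hq2)
        have hrlt : r < r0 := by omega
        have hlle : l ≤ min (l0 - 1) r := by
          rcases eq_or_lt_of_le hp1 with he | hlt
          · have h0' : ((l0 : ℕ) : ℤ) = 0 := hp3 he
            have h0 : l0 = 0 := by exact_mod_cast h0'
            have : p.1 = 0 := by omega
            simp [hldef, this, h0]
          · have h1 : l ≤ l0 - 1 := by omega
            have h2 : l ≤ r := by omega
            omega
        have hxm : (⟨r, l⟩ : (_ : ℕ) × ℕ) ∈ idx (l0 - 1) r0 := by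
          simp only [idx, Finset.mem_sigma, Finset.mem_range, Nat.lt_succ_iff]
          exact ⟨hrlt, hlle⟩
        refine Finset.mem_union_right _ (Finset.mem_biUnion.mpr ⟨⟨⟨r, l⟩, hxm⟩, Finset.mem_attach _ _, ?_⟩)
        rw [Finset.mem_image]
        refine ⟨w', ?_, ?_⟩
        · refine (IH r hrlt l w').mpr ?_
          refine ⟨fun q hq => hb q (List.mem_cons_of_mem p hq), ?_⟩
          have : ((l : ℤ), (r : ℤ)) = p := by
            ext <;> simp [hl', hr']
          rw [this]
          exact hchain
        · have : ((l : ℤ), (r : ℤ)) = p := by ext <;> simp [hl', hr']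
          rw [this]

lemma card_W : ∀ (r0 l0 : ℕ), l0 ≤ r0 → (W l0 r0).card = Psi (l0 - 1) r0 := by
  intro r0
  induction r0 using Nat.strong_induction_on with
  | _ r0 IH =>
    intro l0 hl0
    rw [W]
    rw [Finset.card_union_of_disjoint, Finset.card_singleton, Finset.card_biUnion]
    · have h1 : ∀ x ∈ (idx (l0 - 1) r0).attach,
          ((W x.1.2 x.1.1).image (List.cons ((x.1.2 : ℤ), (x.1.1 : ℤ)))).card
            = Psi (x.1.2 - 1) x.1.1 := by
        intro x _
        rw [Finset.card_image_of_injective _ (fun a b h => List.tail_eq_of_cons_eq h)]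
        have hm := x.2
        simp only [idx, Finset.mem_sigma, Finset.mem_range, Nat.lt_succ_iff] at hm
        exact IH x.1.1 hm.1 x.1.2 (le_trans hm.2 (min_le_right _ _))
      rw [Finset.sum_congr rfl h1]
      rw [Finset.sum_attach (idx (l0 - 1) r0) (fun x => Psi (x.2 - 1) x.1)]
      rw [idx, Finset.sum_sigma]
      rw [psi_main r0 (l0 - 1) (by omega)]
    · -- pairwise disjoint images
      intro x _ y _ hxy
      simp only [Finset.disjoint_left, Finset.mem_image]
      rintro a ⟨w1, -, rfl⟩ ⟨w2, -, he⟩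
      apply hxy
      have hh : ((y.1.2 : ℤ), (y.1.1 : ℤ)) = ((x.1.2 : ℤ), (x.1.1 : ℤ)) := (List.cons_eq_cons.mp he).1
      have hh1 : ((y.1.2 : ℕ) : ℤ) = ((x.1.2 : ℕ) : ℤ) := congrArg Prod.fst hh
      have hh2 : ((y.1.1 : ℕ) : ℤ) = ((x.1.1 : ℕ) : ℤ) := congrArg Prod.snd hh
      have h1 : y.1.2 = x.1.2 := by exact_mod_cast hh1
      have h2 : y.1.1 = x.1.1 := by exact_mod_cast hh2
      apply Subtype.ext
      exact Sigma.ext h2.symm (heq_of_eq h1.symm)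
    · -- {[]} disjoint from biUnion
      simp only [Finset.disjoint_left, Finset.mem_singleton, Finset.mem_biUnion]
      rintro a rfl ⟨x, -, hx⟩
      simp only [Finset.mem_image] at hx
      obtain ⟨w1, -, he⟩ := hx
      exact List.cons_ne_nil _ _ he

lemma bound_chain : ∀ (w : List (ℤ × ℤ)) (b : ℤ × ℤ), List.Chain relQ b w →
    ∀ p ∈ w, p.1 ≤ b.1 ∧ p.2 < b.2 := by
  intro w
  induction w with
  | nil => intro b _ p hp; simp at hp
  | cons a t IH =>
    intro b hc p hp
    rcases List.chain_cons.mp hc with ⟨hba, hat⟩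
    rcases List.mem_cons.mp hp with rfl | hp
    · exact ⟨hba.1, hba.2.1⟩
    · obtain ⟨h1, h2⟩ := IH a hat p hp
      exact ⟨le_trans h1 hba.1, lt_trans h2 hba.2.1⟩

lemma chainQ_of_chain (n : ℤ) : ∀ (t : List (ℤ × ℤ)) (a : ℤ × ℤ),
    List.Chain (fun p q : ℤ × ℤ =>
      q.1 ≤ p.1 ∧ q.2 ≤ p.2 ∧ (q.1 = p.1 → p.1 = 0) ∧ (q.2 = p.2 → p.2 = n)) a t →
    (∀ p ∈ a :: t, p.2 ≠ n) → List.Chain relQ a t := by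
  intro t
  induction t with
  | nil => intro a _ _; exact List.Chain.nil
  | cons b t IH =>
    intro a hc hne
    rcases List.chain_cons.mp hc with ⟨hab, hbt⟩
    refine List.Chain.cons ⟨hab.1, ?_, hab.2.2.1⟩ ?_
    · rcases lt_or_eq_of_le hab.2.1 with h | h
      · exact h
      · exact absurd (hab.2.2.2 h) (hne a (by simp))
    · exact IH b hbt (fun p hp => hne p (List.mem_cons_of_mem a hp))

lemma iso (n : ℤ) (w : List (ℤ × ℤ)) :
    (IsPNF n w ∧ affineLength n w = 0) ↔ Qc (n, n) w := by
  constructor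
  · rintro ⟨⟨hb, hc⟩, ha⟩
    have hnot : ∀ p ∈ w, p.2 ≠ n := by
      intro p hp
      have := List.countP_eq_zero.mp ha p hp
      simpa using this
    refine ⟨fun p hp => ⟨(hb p hp).1, (hb p hp).2.1⟩, ?_⟩
    cases w with
    | nil => exact List.Chain.nil
    | cons a t =>
      have ha2 : a.2 < n :=
        lt_of_le_of_ne (hb a (List.mem_cons_self)).2.2 (hnot a (List.mem_cons_self))
      refine List.Chain.cons ⟨?_, ha2, ?_⟩ ?_
      · exact le_trans (hb a (List.mem_cons_self)).2.1 (hb a (List.mem_cons_self)).2.2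
      · intro he
        have he' : a.1 = n := he
        have : n ≤ a.2 := he' ▸ (hb a (List.mem_cons_self)).2.1
        exact absurd this (not_le.mpr ha2)
      · exact chainQ_of_chain n t a hc hnot
  · rintro ⟨hb, hc⟩
    have hlt : ∀ p ∈ w, p.1 ≤ n ∧ p.2 < n := bound_chain w (n, n) hc
    refine ⟨⟨fun p hp => ⟨(hb p hp).1, (hb p hp).2, le_of_lt (hlt p hp).2⟩, ?_⟩, ?_⟩
    · cases w with
      | nil => exact List.isChain_nil
      | cons a t =>
        have hat : List.Chain relQ a t := (List.chain_cons.mp hc).2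
        exact List.Chain.imp
          (fun q p h => ⟨h.1, le_of_lt h.2.1, h.2.2, fun he => absurd he (ne_of_lt h.2.1)⟩) hat
    · rw [affineLength, List.countP_eq_zero]
      intro p hp
      simpa using ne_of_lt (hlt p hp).2

/-- For every integer `n ≥ 1`, the number of positive normal forms on `n` of affine
length `0` equals `binom(2n, n)`. -/
theorem numPNF_affine_zero (n : ℕ) (hn : 1 ≤ n) :
    numPNF (n : ℤ) 0 = (2 * n).choose n := by
  obtain ⟨m, rfl⟩ : ∃ m, n = m + 1 := ⟨n - 1, by omega⟩
  rw [numPNF]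
  have he : ∀ w, (IsPNF ((m + 1 : ℕ) : ℤ) w ∧ affineLength ((m + 1 : ℕ) : ℤ) w = 0)
      ↔ w ∈ W (m + 1) (m + 1) :=
    fun w => (iso _ w).trans (mem_W (m + 1) (m + 1) w).symm
  rw [Nat.card_congr (Equiv.subtypeEquivRight he)]
  have hcard : Nat.card {w // w ∈ W (m + 1) (m + 1)} = (W (m + 1) (m + 1)).card := by
    rw [Nat.card_eq_fintype_card]
    exact Fintype.card_coe _
  rw [hcard, card_W (m + 1) (m + 1) le_rfl]
  have h1 : Psi (m + 1) (m + 1) = (2 * (m + 1)).choose (m + 1) := by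
    rw [Psi, Finset.Icc_self, Finset.sum_singleton]
    congr 1
    omega
  have h2 : m + 1 - 1 = m := rfl
  rw [h2, ← psi_lucky m, h1]
end

section
/- For all integers n ≥ 1 and s ≥ 0, the number a(n,s) of positive normal forms on n of affine length s equals C(2n, 2s), where C denotes the blobbed Catalan triangle. -/
namespace PNFAux

open List

/-- The chain relation of a positive normal form. -/
def R (n : ℤ) (p q : ℤ × ℤ) : Prop :=
  q.1 ≤ p.1 ∧ q.2 ≤ p.2 ∧ (q.1 = p.1 → p.1 = 0) ∧ (q.2 = p.2 → p.2 = n)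

instance R_trans (n : ℤ) : IsTrans (ℤ × ℤ) (R n) where
  trans p q r hpq hqr := by
    obtain ⟨h1, h2, h3, h4⟩ := hpq
    obtain ⟨g1, g2, g3, g4⟩ := hqr
    exact ⟨g1.trans h1, g2.trans h2, fun h => h3 (by omega), fun h => h4 (by omega)⟩

lemma isPNF_iff {n : ℤ} {w : List (ℤ × ℤ)} :
    IsPNF n w ↔ (∀ p ∈ w, 0 ≤ p.1 ∧ p.1 ≤ p.2 ∧ p.2 ≤ n) ∧ w.Pairwise (R n) := by
  constructor
  · rintro ⟨h1, h2⟩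
    exact ⟨h1, List.isChain_iff_pairwise.mp h2⟩
  · rintro ⟨h1, h2⟩
    exact ⟨h1, (List.isChain_iff_pairwise : List.IsChain (R n) w ↔ w.Pairwise (R n)).mpr h2⟩

lemma prod_ext' {p : ℤ × ℤ} {a b : ℤ} (h1 : p.1 = a) (h2 : p.2 = b) : p = (a, b) := by
  subst h1; subst h2; rfl

/-! ### counting helpers -/

lemma countP_le_one_of_pairwise {α : Type*} {S : α → α → Prop} {P : α → Bool} {w : List α}
    (hp : w.Pairwise S) (h : ∀ p q, S p q → P p = true → P q = true → False) :
    w.countP P ≤ 1 := by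
  induction w with
  | nil => simp
  | cons a l ih =>
    rcases pairwise_cons.mp hp with ⟨ha, hl⟩
    by_cases hPa : P a = true
    · have h0 : l.countP P = 0 :=
        countP_eq_zero.mpr (fun q hq hPq => h a q (ha q hq) hPa hPq)
      simp [countP_cons, hPa, h0]
    · simp only [countP_cons, hPa, if_false]
      simpa using ih hl

lemma pairwise_of_countP_le_one {α : Type*} {P : α → Bool} {w : List α}
    (h : w.countP P ≤ 1) : w.Pairwise (fun p q => ¬(P p = true ∧ P q = true)) := by
  induction w with
  | nil => simp
  | cons a l ih =>
    rw [countP_cons] at h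
    by_cases hPa : P a = true
    · rw [if_pos hPa] at h
      have h0 : l.countP P = 0 := by omega
      refine pairwise_cons.mpr ⟨fun q hq hc => ?_, ih (by omega)⟩
      exact (countP_eq_zero.mp h0 q hq) hc.2
    · rw [if_neg hPa] at h
      exact pairwise_cons.mpr ⟨fun q hq hc => hPa hc.1, ih (by omega)⟩

lemma countP_min_split {m : ℤ} {w : List (ℤ × ℤ)} (hb : ∀ p ∈ w, p.2 ≤ m + 1) :
    w.countP (fun p => decide (min p.2 m = m)) =
      w.countP (fun p => decide (p.2 = m + 1)) + w.countP (fun p => decide (p.2 = m)) := by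
  induction w with
  | nil => rfl
  | cons a l ih =>
    have ha := hb a mem_cons_self
    have ih' := ih (fun p hp => hb p (mem_cons_of_mem a hp))
    simp only [countP_cons, ih', decide_eq_true_eq]
    rcases le_or_gt a.2 m with h | h
    · rw [min_eq_left h]
      split_ifs <;> omega
    · have h1 : a.2 = m + 1 := by omega
      rw [min_eq_right h.le]
      split_ifs <;> omega

lemma take_drop_countP {m : ℤ} {w : List (ℤ × ℤ)}
    (hb : ∀ p ∈ w, p.2 ≤ m) (hp : w.Pairwise (fun p q : ℤ × ℤ => q.2 ≤ p.2)) :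
    (∀ p ∈ w.take (w.countP (fun p => decide (p.2 = m))), p.2 = m) ∧
    (∀ p ∈ w.drop (w.countP (fun p => decide (p.2 = m))), p.2 ≠ m) := by
  induction w with
  | nil => simp
  | cons a l ih =>
    rcases pairwise_cons.mp hp with ⟨ha, hl⟩
    have hb' : ∀ p ∈ l, p.2 ≤ m := fun p hp' => hb p (mem_cons_of_mem a hp')
    by_cases hm : a.2 = m
    · have hc : (a :: l).countP (fun p => decide (p.2 = m)) =
          l.countP (fun p => decide (p.2 = m)) + 1 := by
        simp [countP_cons, hm]
      rw [hc, take_succ_cons, drop_succ_cons]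
      obtain ⟨ih1, ih2⟩ := ih hb' hl
      refine ⟨?_, ih2⟩
      intro p hp'
      rcases mem_cons.mp hp' with rfl | hp''
      · exact hm
      · exact ih1 p hp''
    · have hc0 : l.countP (fun p => decide (p.2 = m)) = 0 := by
        refine countP_eq_zero.mpr (fun q hq => ?_)
        have h1 := ha q hq
        have h2 := hb a mem_cons_self
        simp only [decide_eq_true_eq]
        omega
      have hc : (a :: l).countP (fun p => decide (p.2 = m)) = 0 := by
        simp [countP_cons, hm, hc0]
      rw [hc]
      simp only [take_zero, drop_zero]
      refine ⟨by simp, ?_⟩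
      intro p hp'
      rcases mem_cons.mp hp' with rfl | hp''
      · exact hm
      · have h1 := ha p hp''
        have h2 := hb a mem_cons_self
        omega

/-! ### the three families of subtypes -/

abbrev TT (n : ℤ) (s : ℕ) : Type := {w : List (ℤ × ℤ) // IsPNF n w ∧ affineLength n w = s}

abbrev TTb (m : ℤ) (s : ℕ) : Type :=
  {w : List (ℤ × ℤ) // (IsPNF (m + 1) w ∧ ∀ p ∈ w, p.1 ≤ m) ∧ affineLength (m + 1) w = s}

abbrev TTc (m : ℤ) (s : ℕ) : Type :=
  {w : List (ℤ × ℤ) // (IsPNF (m + 1) w ∧ ∀ p ∈ w, p.1 ≤ m) ∧ affineLength (m + 1) w + 1 = s}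

/-! ### the top-block equivalence (step A) -/

lemma top_head {m : ℤ} (hm : 0 ≤ m) {w : List (ℤ × ℤ)} (hw : IsPNF (m + 1) w)
    (h : w.headI.1 = m + 1) : w = ((m + 1, m + 1) : ℤ × ℤ) :: w.tail := by
  cases w with
  | nil =>
    exfalso
    simp only [headI_nil] at h
    have : (default : ℤ × ℤ).1 = 0 := rfl
    omega
  | cons a t =>
    have hb := (isPNF_iff.mp hw).1 a mem_cons_self
    simp only [headI_cons] at h
    have ha : a = ((m + 1, m + 1) : ℤ × ℤ) := by
      have h2 : a.2 = m + 1 := by omega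
      exact prod_ext' h h2
    simp [← ha]

lemma cons_top_iff {m : ℤ} (hm : 0 ≤ m) {t : List (ℤ × ℤ)} :
    IsPNF (m + 1) (((m + 1, m + 1) : ℤ × ℤ) :: t) ↔
      (IsPNF (m + 1) t ∧ ∀ p ∈ t, p.1 ≤ m) := by
  rw [isPNF_iff, isPNF_iff, pairwise_cons]
  constructor
  · rintro ⟨hb, hR, hpw⟩
    refine ⟨⟨fun p hp => hb p (mem_cons_of_mem _ hp), hpw⟩, fun p hp => ?_⟩
    obtain ⟨r1, r2, r3, r4⟩ := hR p hp
    by_contra hc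
    push_neg at hc
    have h1 : p.1 = m + 1 := by simp at r1; omega
    have := r3 h1
    omega
  · rintro ⟨⟨hb, hpw⟩, hle⟩
    refine ⟨?_, fun p hp => ?_, hpw⟩
    · intro p hp
      rcases mem_cons.mp hp with rfl | hp'
      · exact ⟨by omega, le_refl _, le_refl _⟩
      · exact hb p hp'
    · have h1 := hle p hp
      have h2 := (hb p hp).2.2
      exact ⟨by simp; omega, by simp; omega, fun he => by simp at he; omega, fun _ => rfl⟩

lemma aff_cons_top {m : ℤ} (t : List (ℤ × ℤ)) :
    affineLength (m + 1) (((m + 1, m + 1) : ℤ × ℤ) :: t) = affineLength (m + 1) t + 1 := by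
  simp [affineLength, countP_cons]

lemma headI_ne_top {m : ℤ} (hm : 0 ≤ m) {w : List (ℤ × ℤ)} (h : ∀ p ∈ w, p.1 ≤ m) :
    w.headI.1 ≠ m + 1 := by
  cases w with
  | nil =>
    simp only [headI_nil]
    have : (default : ℤ × ℤ).1 = 0 := rfl
    omega
  | cons a t =>
    have := h a mem_cons_self
    simp only [headI_cons]
    omega

lemma all_le_of_headI_ne {m : ℤ} {w : List (ℤ × ℤ)} (hw : IsPNF (m + 1) w)
    (h : w.headI.1 ≠ m + 1) : ∀ p ∈ w, p.1 ≤ m := by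
  obtain ⟨hb, hpw⟩ := isPNF_iff.mp hw
  cases w with
  | nil => simp
  | cons a t =>
    simp only [headI_cons] at h
    have hb1 := hb a mem_cons_self
    have ha1 : a.1 ≤ m := by omega
    intro p hp
    rcases mem_cons.mp hp with rfl | hp'
    · exact ha1
    · have := ((pairwise_cons.mp hpw).1 p hp').1
      omega

def eA (m : ℤ) (hm : 0 ≤ m) (s : ℕ) : TT (m + 1) s ≃ TTb m s ⊕ TTc m s where
  toFun x :=
    if h : x.val.headI.1 = m + 1 then
      Sum.inr ⟨x.val.tail, by
        have hx := top_head hm x.prop.1 h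
        have hw' : IsPNF (m + 1) (((m + 1, m + 1) : ℤ × ℤ) :: x.val.tail) := by
          rw [← hx]; exact x.prop.1
        have haff := x.prop.2
        rw [hx, aff_cons_top] at haff
        exact ⟨(cons_top_iff hm).mp hw', haff⟩⟩
    else
      Sum.inl ⟨x.val, ⟨⟨x.prop.1, all_le_of_headI_ne x.prop.1 h⟩, x.prop.2⟩⟩
  invFun y :=
    match y with
    | Sum.inl z => ⟨z.val, z.prop.1.1, z.prop.2⟩
    | Sum.inr z => ⟨((m + 1, m + 1) : ℤ × ℤ) :: z.val, (cons_top_iff hm).mpr z.prop.1, by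
        rw [aff_cons_top]; exact z.prop.2⟩
  left_inv x := by
    by_cases h : x.val.headI.1 = m + 1
    · simp only [dif_pos h]
      exact Subtype.ext (top_head hm x.prop.1 h).symm
    · simp only [dif_neg h]
  right_inv y := by
    cases y with
    | inl z =>
      have h : z.val.headI.1 ≠ m + 1 := headI_ne_top hm z.prop.1.2
      simp only [dif_neg h]
    | inr z =>
      have h : (((m + 1, m + 1) : ℤ × ℤ) :: z.val).headI.1 = m + 1 := by simp
      simp only [dif_pos h, List.tail_cons]

def eC (m : ℤ) (t : ℕ) : TTc m (t + 1) ≃ TTb m t :=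
  Equiv.subtypeEquivRight (fun w => by
    constructor
    · rintro ⟨h1, h2⟩; exact ⟨h1, by omega⟩
    · rintro ⟨h1, h2⟩; exact ⟨h1, by omega⟩)

instance isEmpty_TTc0 (m : ℤ) : IsEmpty (TTc m 0) :=
  ⟨fun x => by have := x.prop.2; omega⟩

/-! ### the r-lowering equivalence (step B) -/

def fmap (m : ℤ) (p : ℤ × ℤ) : ℤ × ℤ := (p.1, min p.2 m)

def gmap (m : ℤ) (p : ℤ × ℤ) : ℤ × ℤ := (p.1, m + 1)

def bump (m : ℤ) (s : ℕ) (w : List (ℤ × ℤ)) : List (ℤ × ℤ) :=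
  (w.take s).map (gmap m) ++ w.drop s

lemma phi_isPNF {m : ℤ} {w : List (ℤ × ℤ)} (hw : IsPNF (m + 1) w)
    (hl : ∀ p ∈ w, p.1 ≤ m) : IsPNF m (w.map (fmap m)) := by
  obtain ⟨hb, hpw⟩ := isPNF_iff.mp hw
  rw [isPNF_iff]
  constructor
  · intro p hp
    obtain ⟨q, hq, rfl⟩ := mem_map.mp hp
    have h1 := hb q hq
    have h2 := hl q hq
    exact ⟨h1.1, by simp [fmap]; omega, by simp [fmap]⟩
  · rw [pairwise_map]
    refine hpw.imp ?_
    rintro p q ⟨h1, h2, h3, h4⟩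
    refine ⟨h1, by simp [fmap]; omega, h3, ?_⟩
    simp only [fmap]
    intro he
    rcases le_or_gt m p.2 with h | h
    · rw [min_eq_right h]
    · exfalso
      rw [min_eq_left h.le] at he
      rw [min_eq_left (by omega : q.2 ≤ m)] at he
      have := h4 he
      omega

lemma phi_aff {m : ℤ} {w : List (ℤ × ℤ)} {s : ℕ} (hw : IsPNF (m + 1) w)
    (haff : affineLength (m + 1) w = s) :
    affineLength m (w.map (fmap m)) = s ∨ affineLength m (w.map (fmap m)) = s + 1 := by
  obtain ⟨hb, hpw⟩ := isPNF_iff.mp hw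
  have hb2 : ∀ p ∈ w, p.2 ≤ m + 1 := fun p hp => (hb p hp).2.2
  unfold affineLength at *
  rw [countP_map]
  have hcomp : ((fun p : ℤ × ℤ => decide (p.2 = m)) ∘ fmap m) =
      (fun p : ℤ × ℤ => decide (min p.2 m = m)) := rfl
  rw [hcomp, countP_min_split hb2]
  have hle1 : w.countP (fun p => decide (p.2 = m)) ≤ 1 := by
    refine countP_le_one_of_pairwise hpw ?_
    intro p q hR hp hq
    simp only [decide_eq_true_eq] at hp hq
    have := hR.2.2.2 (by omega)
    omega
  have : w.countP (fun p => decide (p.2 = m + 1)) = s := haff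
  omega

lemma psi_props {m : ℤ} {s t : ℕ} {w : List (ℤ × ℤ)} (hw : IsPNF m w)
    (ht : affineLength m w = t) (hst : s ≤ t) (hts : t ≤ s + 1) :
    (IsPNF (m + 1) (bump m s w) ∧ ∀ p ∈ bump m s w, p.1 ≤ m) ∧
      affineLength (m + 1) (bump m s w) = s := by
  obtain ⟨hb, hpw⟩ := isPNF_iff.mp hw
  have hb2 : ∀ p ∈ w, p.2 ≤ m := fun p hp => (hb p hp).2.2
  have hpw2 : w.Pairwise (fun p q : ℤ × ℤ => q.2 ≤ p.2) := hpw.imp (fun h => h.2.1)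
  have hTD := take_drop_countP hb2 hpw2
  have hcount : w.countP (fun p => decide (p.2 = m)) = t := ht
  rw [hcount] at hTD
  have hlen : t ≤ w.length := by rw [← hcount]; exact countP_le_length
  have htake : ∀ p ∈ w.take s, p.2 = m := by
    intro p hp
    apply hTD.1
    have he : (w.take t).take s = w.take s := by rw [take_take, min_eq_left hst]
    rw [← he] at hp
    exact take_subset s (w.take t) hp
  have hdropc : (w.drop s).countP (fun p => decide (p.2 = m)) = t - s := by
    have h0 := congrArg (countP (fun p : ℤ × ℤ => decide (p.2 = m))) (take_append_drop s w)
    rw [countP_append] at h0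
    have hctake : (w.take s).countP (fun p => decide (p.2 = m)) = (w.take s).length :=
      countP_eq_length.mpr (fun p hp => by simp [htake p hp])
    rw [hctake, length_take, hcount] at h0
    omega
  have hacross : ∀ p ∈ w.take s, ∀ q ∈ w.drop s, R m p q := by
    have : (w.take s ++ w.drop s).Pairwise (R m) := by rw [take_append_drop]; exact hpw
    exact (pairwise_append.mp this).2.2
  refine ⟨⟨?_, ?_⟩, ?_⟩
  · rw [isPNF_iff]
    unfold bump
    constructor
    · intro p hp
      rcases mem_append.mp hp with hp | hp
      · obtain ⟨q, hq, rfl⟩ := mem_map.mp hp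
        have h1 := hb q (take_subset s w hq)
        exact ⟨h1.1, by simp [gmap]; omega, by simp [gmap]⟩
      · have h1 := hb p (drop_subset s w hp)
        exact ⟨h1.1, h1.2.1, by omega⟩
    · rw [pairwise_append]
      refine ⟨?_, ?_, ?_⟩
      · rw [pairwise_map]
        refine (hpw.sublist (take_sublist s w)).imp ?_
        rintro p q ⟨h1, h2, h3, h4⟩
        exact ⟨h1, le_refl _, h3, fun _ => rfl⟩
      · have hle1 : (w.drop s).countP (fun p => decide (p.2 = m)) ≤ 1 := by omega
        have hnb := pairwise_of_countP_le_one hle1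
        refine ((hpw.sublist (drop_sublist s w)).and hnb).imp ?_
        rintro p q ⟨⟨h1, h2, h3, h4⟩, hnot⟩
        refine ⟨h1, by omega, h3, fun he => ?_⟩
        exfalso
        have hpm : p.2 = m := h4 he
        exact hnot ⟨by simp [hpm], by simp [he.trans hpm]⟩
      · intro p' hp' q hq
        obtain ⟨p, hp, rfl⟩ := mem_map.mp hp'
        obtain ⟨h1, h2, h3, h4⟩ := hacross p hp q hq
        have hq2 : q.2 ≤ m := hb2 q (drop_subset s w hq)
        exact ⟨h1, by simp [gmap]; omega, h3, fun he => by simp [gmap] at he; omega⟩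
  · intro p hp
    rcases mem_append.mp hp with hp | hp
    · obtain ⟨q, hq, rfl⟩ := mem_map.mp hp
      have h1 := hb q (take_subset s w hq)
      have h2 := hb2 q (take_subset s w hq)
      simp [gmap]; omega
    · have h1 := hb p (drop_subset s w hp)
      have h2 := hb2 p (drop_subset s w hp)
      omega
  · unfold affineLength bump
    rw [countP_append, countP_map]
    have h1 : countP ((fun p : ℤ × ℤ => decide (p.2 = m + 1)) ∘ gmap m) (w.take s) =
        (w.take s).length := countP_eq_length.mpr (fun p hp => by simp [gmap])
    have h2 : countP (fun p : ℤ × ℤ => decide (p.2 = m + 1)) (w.drop s) = 0 :=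
      countP_eq_zero.mpr (fun p hp => by
        have := hb2 p (drop_subset s w hp)
        simp only [decide_eq_true_eq]
        omega)
    rw [h1, h2, length_take]
    omega

lemma bump_map {m : ℤ} {s : ℕ} {w : List (ℤ × ℤ)}
    (htake : ∀ p ∈ w.take s, p.2 = m) (hdrop : ∀ p ∈ w.drop s, p.2 ≤ m) :
    (bump m s w).map (fmap m) = w := by
  unfold bump
  rw [map_append, map_map]
  have h1 : (w.take s).map (fmap m ∘ gmap m) = w.take s := by
    have := map_congr_left (l := w.take s) (f := fmap m ∘ gmap m) (g := id) ?_
    · simpa using this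
    · intro p hp
      have hp2 := htake p hp
      show (p.1, min (m + 1) m) = p
      rw [min_eq_right (by omega : m ≤ m + 1), ← hp2]
  have h2 : (w.drop s).map (fmap m) = w.drop s := by
    have := map_congr_left (l := w.drop s) (f := fmap m) (g := id) ?_
    · simpa using this
    · intro p hp
      have hp2 := hdrop p hp
      simp only [fmap, id]
      rw [min_eq_left hp2]
  rw [h1, h2, take_append_drop]

lemma map_bump {m : ℤ} {s : ℕ} {w : List (ℤ × ℤ)}
    (htake : ∀ p ∈ w.take s, p.2 = m + 1) (hdrop : ∀ p ∈ w.drop s, p.2 ≤ m) :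
    bump m s (w.map (fmap m)) = w := by
  unfold bump
  rw [← map_take, ← map_drop, map_map]
  have h1 : (w.take s).map (gmap m ∘ fmap m) = w.take s := by
    have := map_congr_left (l := w.take s) (f := gmap m ∘ fmap m) (g := id) ?_
    · simpa using this
    · intro p hp
      have hp2 := htake p hp
      show (p.1, m + 1) = p
      rw [← hp2]
  have h2 : (w.drop s).map (fmap m) = w.drop s := by
    have := map_congr_left (l := w.drop s) (f := fmap m) (g := id) ?_
    · simpa using this
    · intro p hp
      have hp2 := hdrop p hp
      simp only [fmap, id]
      rw [min_eq_left hp2]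
  rw [h1, h2, take_append_drop]

lemma ttb_take_drop {m : ℤ} {s : ℕ} {w : List (ℤ × ℤ)} (hw : IsPNF (m + 1) w)
    (haff : affineLength (m + 1) w = s) :
    (∀ p ∈ w.take s, p.2 = m + 1) ∧ (∀ p ∈ w.drop s, p.2 ≤ m) := by
  obtain ⟨hb, hpw⟩ := isPNF_iff.mp hw
  have hb2 : ∀ p ∈ w, p.2 ≤ m + 1 := fun p hp => (hb p hp).2.2
  have hpw2 : w.Pairwise (fun p q : ℤ × ℤ => q.2 ≤ p.2) := hpw.imp (fun h => h.2.1)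
  have hTD := take_drop_countP hb2 hpw2
  have hcount : w.countP (fun p => decide (p.2 = m + 1)) = s := haff
  rw [hcount] at hTD
  refine ⟨hTD.1, fun p hp => ?_⟩
  have h1 := hTD.2 p hp
  have h2 := hb2 p (drop_subset s w hp)
  omega

def eB (m : ℤ) (s : ℕ) : TTb m s ≃ TT m s ⊕ TT m (s + 1) where
  toFun x :=
    if h : affineLength m (x.val.map (fmap m)) = s then
      Sum.inl ⟨x.val.map (fmap m), phi_isPNF x.prop.1.1 x.prop.1.2, h⟩
    else
      Sum.inr ⟨x.val.map (fmap m), phi_isPNF x.prop.1.1 x.prop.1.2, by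
        rcases phi_aff x.prop.1.1 x.prop.2 with h' | h'
        · exact absurd h' h
        · exact h'⟩
  invFun y :=
    match y with
    | Sum.inl z => ⟨bump m s z.val, psi_props z.prop.1 z.prop.2 (le_refl s) (by omega)⟩
    | Sum.inr z => ⟨bump m s z.val, psi_props z.prop.1 z.prop.2 (by omega) (le_refl (s + 1))⟩
  left_inv x := by
    have hTD := ttb_take_drop x.prop.1.1 x.prop.2
    dsimp only
    by_cases h : affineLength m (x.val.map (fmap m)) = s
    · rw [dif_pos h]
      exact Subtype.ext (map_bump hTD.1 hTD.2)
    · rw [dif_neg h]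
      exact Subtype.ext (map_bump hTD.1 hTD.2)
  right_inv y := by
    cases y with
    | inl z =>
      have hz := isPNF_iff.mp z.prop.1
      have htake : ∀ p ∈ z.val.take s, p.2 = m := by
        have hTD := take_drop_countP (fun p hp => (hz.1 p hp).2.2) (hz.2.imp (fun h => h.2.1))
        have hcount : z.val.countP (fun p => decide (p.2 = m)) = s := z.prop.2
        rw [hcount] at hTD
        exact hTD.1
      have hdrop : ∀ p ∈ z.val.drop s, p.2 ≤ m :=
        fun p hp => (hz.1 p (drop_subset s z.val hp)).2.2
      have key : (bump m s z.val).map (fmap m) = z.val := bump_map htake hdrop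
      have hc : affineLength m ((bump m s z.val).map (fmap m)) = s := by
        rw [key]; exact z.prop.2
      dsimp only
      rw [dif_pos hc]
      exact congrArg Sum.inl (Subtype.ext key)
    | inr z =>
      have hz := isPNF_iff.mp z.prop.1
      have hcount : z.val.countP (fun p => decide (p.2 = m)) = s + 1 := z.prop.2
      have hlen : s + 1 ≤ z.val.length := by
        have h9 := countP_le_length (p := fun p : ℤ × ℤ => decide (p.2 = m)) (l := z.val)
        rw [hcount] at h9
        exact h9
      have hTD := take_drop_countP (fun p hp => (hz.1 p hp).2.2) (hz.2.imp (fun h => h.2.1))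
      rw [hcount] at hTD
      have htake : ∀ p ∈ z.val.take s, p.2 = m := by
        intro p hp
        apply hTD.1
        have he : (z.val.take (s + 1)).take s = z.val.take s := by
          rw [take_take, min_eq_left (by omega)]
        rw [← he] at hp
        exact take_subset s (z.val.take (s + 1)) hp
      have hdrop : ∀ p ∈ z.val.drop s, p.2 ≤ m :=
        fun p hp => (hz.1 p (drop_subset s z.val hp)).2.2
      have key : (bump m s z.val).map (fmap m) = z.val := bump_map htake hdrop
      have hc : ¬ (affineLength m ((bump m s z.val).map (fmap m)) = s) := by
        rw [key]
        intro hcon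
        have := z.prop.2
        omega
      dsimp only
      rw [dif_neg hc]
      exact congrArg Sum.inr (Subtype.ext key)

/-! ### base case -/

lemma pairwise_R_replicate (s : ℕ) : (replicate s ((0, 0) : ℤ × ℤ)).Pairwise (R 0) := by
  induction s with
  | zero => simp
  | succ s ih =>
    rw [replicate_succ, pairwise_cons]
    refine ⟨fun q hq => ?_, ih⟩
    have := eq_of_mem_replicate hq
    subst this
    exact ⟨le_refl _, le_refl _, fun _ => rfl, fun _ => rfl⟩

lemma tt_zero_iff {s : ℕ} {w : List (ℤ × ℤ)} :
    (IsPNF 0 w ∧ affineLength 0 w = s) ↔ w = replicate s ((0, 0) : ℤ × ℤ) := by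
  constructor
  · rintro ⟨h1, h2⟩
    have hall : ∀ p ∈ w, p = ((0, 0) : ℤ × ℤ) := by
      intro p hp
      have := (isPNF_iff.mp h1).1 p hp
      have e1 : p.1 = 0 := by omega
      have e2 : p.2 = 0 := by omega
      exact prod_ext' e1 e2
    have hlen : w.length = s := by
      rw [← h2]
      unfold affineLength
      rw [countP_eq_length.mpr (fun p hp => by simp [(hall p hp)])]
    rw [eq_replicate_iff]
    exact ⟨hlen, hall⟩
  · rintro rfl
    constructor
    · rw [isPNF_iff]
      refine ⟨fun p hp => ?_, pairwise_R_replicate s⟩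
      have := eq_of_mem_replicate hp
      subst this
      exact ⟨le_refl _, le_refl _, le_refl _⟩
    · unfold affineLength
      rw [countP_eq_length.mpr (fun p hp => by
        have := eq_of_mem_replicate hp
        subst this
        simp), length_replicate]

instance uniqueTT0 (s : ℕ) : Unique (TT 0 s) where
  default := ⟨replicate s ((0, 0) : ℤ × ℤ), tt_zero_iff.mpr rfl⟩
  uniq x := Subtype.ext (tt_zero_iff.mp x.prop)

/-! ### recursion for `blobbedCAux` -/

lemma aux_step (i j : ℕ) :
    blobbedCAux (i + 2) (j + 1) = blobbedCAux (i + 1) j + blobbedCAux (i + 1) (j + 2) := rfl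

lemma aux_zero (i : ℕ) : blobbedCAux (i + 2) 0 = 0 := rfl

lemma aux_step' (i j i' j' : ℕ) (hi : i' = i + 2) (hj : j' = j + 1) :
    blobbedCAux i' j' = blobbedCAux (i + 1) j + blobbedCAux (i + 1) (j + 2) := by
  subst hi; subst hj; rfl

lemma aux_zero' (i i' : ℕ) (hi : i' = i + 2) : blobbedCAux i' 0 = 0 := by
  subst hi; rfl

/-! ### main induction -/

lemma key (n : ℕ) :
    (∀ s, Finite (TT (n : ℤ) s)) ∧
      ∀ s, Nat.card (TT (n : ℤ) s) = blobbedCAux (2 * n + 1) (2 * s + 1) := by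
  induction n with
  | zero =>
    constructor
    · intro s
      rw [Nat.cast_zero]
      infer_instance
    · intro s
      rw [Nat.cast_zero, Nat.card_unique]
      have h2 : blobbedCAux (2 * 0 + 1) (2 * s + 1) = 1 := by
        show (if (2 * s + 1) % 2 = 1 then 1 else 0) = 1
        rw [if_pos (by omega)]
      rw [h2]
  | succ n ih =>
    obtain ⟨ihF, ihC⟩ := ih
    have hm : (0 : ℤ) ≤ (n : ℤ) := Int.natCast_nonneg n
    have finb : ∀ t, Finite (TTb (n : ℤ) t) := by
      intro t
      haveI := ihF t
      haveI := ihF (t + 1)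
      exact Finite.of_equiv _ (eB (n : ℤ) t).symm
    have finc : ∀ t, Finite (TTc (n : ℤ) t) := by
      intro t
      match t with
      | 0 => infer_instance
      | t + 1 =>
        haveI := finb t
        exact Finite.of_equiv _ (eC (n : ℤ) t).symm
    have finT : ∀ s, Finite (TT ((n : ℤ) + 1) s) := by
      intro s
      haveI := finb s
      haveI := finc s
      exact Finite.of_equiv _ (eA (n : ℤ) hm s).symm
    have hcast : ((n + 1 : ℕ) : ℤ) = (n : ℤ) + 1 := by push_cast; ring
    constructor
    · intro s
      rw [hcast]
      exact finT s
    · intro s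
      rw [hcast]
      have cardb : ∀ t, Nat.card (TTb (n : ℤ) t) =
          blobbedCAux (2 * n + 1) (2 * t + 1) + blobbedCAux (2 * n + 1) (2 * (t + 1) + 1) := by
        intro t
        haveI := ihF t
        haveI := ihF (t + 1)
        rw [Nat.card_congr (eB (n : ℤ) t), Nat.card_sum, ihC t, ihC (t + 1)]
      have cardT : Nat.card (TT ((n : ℤ) + 1) s) =
          Nat.card (TTb (n : ℤ) s) + Nat.card (TTc (n : ℤ) s) := by
        haveI := finb s
        haveI := finc s
        rw [Nat.card_congr (eA (n : ℤ) hm s), Nat.card_sum]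
      match s with
      | 0 =>
        have cardc0 : Nat.card (TTc (n : ℤ) 0) = 0 := Nat.card_of_isEmpty
        rw [cardT, cardb 0, cardc0,
          aux_step' (2 * n + 1) 0 (2 * (n + 1) + 1) (2 * 0 + 1) (by ring) (by ring),
          aux_zero' (2 * n) (2 * n + 1 + 1) (by ring),
          aux_step' (2 * n) 1 (2 * n + 1 + 1) (0 + 2) (by ring) (by ring)]
        simp only [show 2 * 0 + 1 = 1 from by norm_num,
          show 2 * (0 + 1) + 1 = 1 + 2 from by norm_num]
        ring
      | t + 1 =>
        have cardcS : Nat.card (TTc (n : ℤ) (t + 1)) = Nat.card (TTb (n : ℤ) t) :=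
          Nat.card_congr (eC (n : ℤ) t)
        rw [cardT, cardb (t + 1), cardcS, cardb t,
          aux_step' (2 * n + 1) (2 * t + 2) (2 * (n + 1) + 1) (2 * (t + 1) + 1)
            (by ring) (by ring),
          aux_step' (2 * n) (2 * t + 1) (2 * n + 1 + 1) (2 * t + 2) (by ring) (by ring),
          aux_step' (2 * n) (2 * t + 3) (2 * n + 1 + 1) (2 * t + 2 + 2) (by ring) (by ring)]
        simp only [show 2 * (t + 1) + 1 = 2 * t + 2 + 1 from by ring,
          show 2 * (t + 1 + 1) + 1 = 2 * t + 3 + 2 from by ring,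
          show 2 * t + 2 + 1 = 2 * t + 1 + 2 from by ring]
        ring
end PNFAux

/-- For all integers `n ≥ 1` and `s ≥ 0`, `a(n,s) = C(2n, 2s)`. -/
theorem numPNF_eq_blobbedC (n s : ℕ) (hn : 1 ≤ n) :
    numPNF (n : ℤ) s = blobbedC (2 * (n : ℤ)) (2 * (s : ℤ)) := by
  have h := (PNFAux.key n).2 s
  have h0 : numPNF (n : ℤ) s = Nat.card (PNFAux.TT (n : ℤ) s) := rfl
  rw [h0, h]
  unfold blobbedC
  congr 1 <;> omega
end

section
/- For every integer n ≥ 1, one has a(n+1, 0) = a(n,0) + a(n,1), where a(m,s) denotes the number of positive normal forms on m of affine length s. -/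
private lemma chain'_imp_mem {α : Type*} {R S : α → α → Prop} :
    ∀ (l : List α), (∀ a ∈ l, ∀ b ∈ l, R a b → S a b) →
      List.Chain' R l → List.Chain' S l := by
  intro l
  induction l with
  | nil => intro _ _; exact List.isChain_nil
  | cons a t ih =>
    intro h hc
    cases t with
    | nil => exact List.isChain_singleton _
    | cons b t' =>
      simp only [List.Chain', List.isChain_cons_cons] at hc ⊢
      refine ⟨h a (by simp) b (by simp) hc.1, ih ?_ hc.2⟩
      intro x hx y hy hr
      exact h x (List.mem_cons_of_mem _ hx) y (List.mem_cons_of_mem _ hy) hr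

private lemma chain'_and {α : Type*} {R S : α → α → Prop} :
    ∀ {l : List α}, List.Chain' R l → List.Chain' S l →
      List.Chain' (fun a b => R a b ∧ S a b) l := by
  intro l
  induction l with
  | nil => intro _ _; exact List.isChain_nil
  | cons a t ih =>
    intro h1 h2
    cases t with
    | nil => exact List.isChain_singleton _
    | cons b t' =>
      simp only [List.Chain', List.isChain_cons_cons] at h1 h2 ⊢
      exact ⟨⟨h1.1, h2.1⟩, ih h1.2 h2.2⟩

private instance : IsTrans (ℤ × ℤ) (fun p q : ℤ × ℤ => q.2 < p.2) :=
  ⟨fun _ _ _ h1 h2 => lt_trans h2 h1⟩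

private lemma strict_chain_of_lt {n : ℤ} {w : List (ℤ × ℤ)}
    (hb : ∀ p ∈ w, p.2 ≤ n)
    (hc : List.Chain' (fun p q : ℤ × ℤ => q.2 ≤ p.2 ∧ (q.2 = p.2 → p.2 = n + 1)) w) :
    List.Chain' (fun p q : ℤ × ℤ => q.2 < p.2) w := by
  refine chain'_imp_mem _ ?_ hc
  intro p hp q hq hr
  rcases lt_or_eq_of_le hr.1 with h | h
  · exact h
  · have h1 := hr.2 h
    have h2 := hb p hp
    omega

private lemma countP_le_one_of_strict {w : List (ℤ × ℤ)} (c : ℤ)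
    (hc : List.Chain' (fun p q : ℤ × ℤ => q.2 < p.2) w) :
    w.countP (fun p => p.2 = c) ≤ 1 := by
  have hp : w.Pairwise (fun p q : ℤ × ℤ => q.2 < p.2) := List.isChain_iff_pairwise.mp hc
  clear hc
  induction w with
  | nil => simp
  | cons a t ih =>
    rw [List.pairwise_cons] at hp
    rw [List.countP_cons]
    by_cases h : a.2 = c
    · have ht : t.countP (fun p => decide (p.2 = c)) = 0 := by
        rw [List.countP_eq_zero]
        intro p hp'
        have := hp.1 p hp'
        simp only [decide_eq_true_eq]
        omega
      simp [h, ht]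
    · simpa [h] using ih hp.2

private lemma strict_of_countP {n : ℤ} : ∀ {w : List (ℤ × ℤ)},
    List.Chain' (fun p q : ℤ × ℤ => q.2 ≤ p.2 ∧ (q.2 = p.2 → p.2 = n)) w →
    w.countP (fun p => p.2 = n) ≤ 1 →
    List.Chain' (fun p q : ℤ × ℤ => q.2 < p.2) w := by
  intro w
  induction w with
  | nil => intro _ _; exact List.isChain_nil
  | cons a t ih =>
    intro hc hcount
    cases t with
    | nil => exact List.isChain_singleton _
    | cons b t' =>
      simp only [List.Chain', List.isChain_cons_cons] at hc ⊢
      constructor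
      · rcases lt_or_eq_of_le hc.1.1 with h | h
        · exact h
        · exfalso
          have ha : a.2 = n := hc.1.2 h
          have hb : b.2 = n := h.trans ha
          simp [List.countP_cons, ha, hb] at hcount
      · apply ih hc.2
        rw [List.countP_cons] at hcount
        omega

private lemma key_s10 (n : ℤ) (w : List (ℤ × ℤ)) :
    (IsPNF (n + 1) w ∧ affineLength (n + 1) w = 0) ↔
    (IsPNF n w ∧ affineLength n w ≤ 1) := by
  constructor
  · rintro ⟨⟨hb, hc⟩, ha⟩
    have hne : ∀ p ∈ w, ¬ p.2 = n + 1 := by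
      rw [affineLength, List.countP_eq_zero] at ha
      intro p hp
      simpa using ha p hp
    have hb' : ∀ p ∈ w, 0 ≤ p.1 ∧ p.1 ≤ p.2 ∧ p.2 ≤ n := by
      intro p hp
      have h1 := hb p hp
      have h2 := hne p hp
      exact ⟨h1.1, h1.2.1, by omega⟩
    have hstrict : List.Chain' (fun p q : ℤ × ℤ => q.2 < p.2) w :=
      strict_chain_of_lt (fun p hp => (hb' p hp).2.2)
        (hc.imp fun _ _ h => ⟨h.2.1, h.2.2.2⟩)
    refine ⟨⟨hb', ?_⟩, countP_le_one_of_strict n hstrict⟩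
    exact (chain'_and hc hstrict).imp fun _ _ h =>
      ⟨h.1.1, h.1.2.1, h.1.2.2.1, fun he => absurd he (ne_of_lt h.2)⟩
  · rintro ⟨⟨hb, hc⟩, ha⟩
    have hstrict : List.Chain' (fun p q : ℤ × ℤ => q.2 < p.2) w :=
      strict_of_countP (hc.imp fun _ _ h => ⟨h.2.1, h.2.2.2⟩) ha
    refine ⟨⟨?_, ?_⟩, ?_⟩
    · intro p hp
      have h1 := hb p hp
      exact ⟨h1.1, h1.2.1, by omega⟩
    · exact (chain'_and hc hstrict).imp fun _ _ h =>
        ⟨h.1.1, h.1.2.1, h.1.2.2.1, fun he => absurd he (ne_of_lt h.2)⟩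
    · rw [affineLength, List.countP_eq_zero]
      intro p hp
      have := (hb p hp).2.2
      simp only [decide_eq_true_eq]
      omega

private lemma pnf_finite (n : ℤ) (s : ℕ) (hs : s ≤ 1) :
    {w : List (ℤ × ℤ) | IsPNF n w ∧ affineLength n w = s}.Finite := by
  set T : Set (ℤ × ℤ) := Set.Icc ((0 : ℤ), (0 : ℤ)) (n, n) with hT
  have hTfin : T.Finite := Set.finite_Icc _ _
  haveI := hTfin.to_subtype
  have hL : {l : List T | l.length ≤ (n + 1).toNat}.Finite := List.finite_length_le _ _
  apply (hL.image (List.map Subtype.val)).subset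
  rintro w ⟨⟨hb, hc⟩, ha⟩
  have hmem : ∀ p ∈ w, p ∈ T := by
    intro p hp
    have h1 := hb p hp
    rw [hT, Set.mem_Icc]
    constructor
    · exact ⟨by omega, by omega⟩
    · exact ⟨by omega, by omega⟩
  -- length bound
  have hstrict : List.Chain' (fun p q : ℤ × ℤ => q.2 < p.2) w :=
    strict_of_countP (hc.imp fun _ _ h => ⟨h.2.1, h.2.2.2⟩) (show affineLength n w ≤ 1 by omega)
  have hpair : (w.map Prod.snd).Pairwise (fun a b : ℤ => b < a) := by
    rw [List.pairwise_map]
    exact List.isChain_iff_pairwise.mp hstrict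
  have hnd : (w.map Prod.snd).Nodup := hpair.imp fun h => ne_of_gt h
  have hsubset : (w.map Prod.snd).toFinset ⊆ Finset.Icc (0 : ℤ) n := by
    intro x hx
    rw [List.mem_toFinset, List.mem_map] at hx
    obtain ⟨p, hp, rfl⟩ := hx
    have := hb p hp
    rw [Finset.mem_Icc]
    omega
  have hlen : w.length ≤ (n + 1).toNat := by
    have h1 : (w.map Prod.snd).toFinset.card = (w.map Prod.snd).length :=
      List.toFinset_card_of_nodup hnd
    have h2 := Finset.card_le_card hsubset
    rw [h1] at h2
    rw [List.length_map] at h2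
    rwa [Int.card_Icc, sub_zero] at h2
  refine ⟨w.pmap (fun p hp => (⟨p, hp⟩ : T)) hmem, ?_, ?_⟩
  · simpa [List.length_pmap] using hlen
  · rw [List.map_pmap]
    exact (List.pmap_eq_map _).trans (List.map_id _)

/-- For every integer `n ≥ 1`, `a(n+1,0) = a(n,0) + a(n,1)`. -/
theorem numPNF_succ_zero (n : ℤ) (hn : 1 ≤ n) :
    numPNF (n + 1) 0 = numPNF n 0 + numPNF n 1 := by
  have e : ∀ (m : ℤ) (s : ℕ),
      numPNF m s = {w : List (ℤ × ℤ) | IsPNF m w ∧ affineLength m w = s}.ncard := by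
    intro m s
    rw [numPNF, ← Nat.card_coe_set_eq]
    rfl
  have hA := pnf_finite n 0 (by norm_num)
  have hB := pnf_finite n 1 le_rfl
  have hdisj : Disjoint {w : List (ℤ × ℤ) | IsPNF n w ∧ affineLength n w = 0}
      {w : List (ℤ × ℤ) | IsPNF n w ∧ affineLength n w = 1} := by
    rw [Set.disjoint_left]
    rintro w ⟨_, h0⟩ ⟨_, h1⟩
    omega
  have hunion : {w : List (ℤ × ℤ) | IsPNF (n + 1) w ∧ affineLength (n + 1) w = 0} =
      {w : List (ℤ × ℤ) | IsPNF n w ∧ affineLength n w = 0} ∪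
      {w : List (ℤ × ℤ) | IsPNF n w ∧ affineLength n w = 1} := by
    ext w
    rw [Set.mem_union]
    simp only [Set.mem_setOf_eq]
    rw [key_s10 n w]
    constructor
    · rintro ⟨h, ha⟩
      rcases Nat.le_one_iff_eq_zero_or_eq_one.mp ha with h0 | h1
      · exact Or.inl ⟨h, h0⟩
      · exact Or.inr ⟨h, h1⟩
    · rintro (⟨h, ha⟩ | ⟨h, ha⟩) <;> exact ⟨h, by omega⟩
  rw [e, e, e, hunion, Set.ncard_union_eq hdisj hA hB]
end

section
/- For all integers n ≥ 1 and s ≥ 1, one has a(n+1, s) = a(n, s−1) + 2·a(n, s) + a(n, s+1), where a(m,t) denotes the number of positive normal forms on m of affine length t. -/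
namespace NumPNFAux

open List

/-- relation on first components: weakly decreasing, repeats only at 0 -/
def RL (x y : ℤ) : Prop := y ≤ x ∧ (y = x → x = 0)

/-- relation on second components: weakly decreasing, repeats only at m -/
def RR (m : ℤ) (x y : ℤ) : Prop := y ≤ x ∧ (y = x → x = m)

lemma RL_trans {a b c : ℤ} (hab : RL a b) (hbc : RL b c) : RL a c :=
  ⟨hbc.1.trans hab.1, fun h => hab.2 (le_antisymm hab.1 (h ▸ hbc.1))⟩

lemma RR_trans {m a b c : ℤ} (hab : RR m a b) (hbc : RR m b c) : RR m a c :=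
  ⟨hbc.1.trans hab.1, fun h => hab.2 (le_antisymm hab.1 (h ▸ hbc.1))⟩

instance instTransR (m : ℤ) : IsTrans (ℤ × ℤ) (fun p q : ℤ × ℤ =>
    q.1 ≤ p.1 ∧ q.2 ≤ p.2 ∧ (q.1 = p.1 → p.1 = 0) ∧ (q.2 = p.2 → p.2 = m)) := by
  constructor
  intro a b c hab hbc
  have h1 : RL a.1 c.1 := RL_trans ⟨hab.1, hab.2.2.1⟩ ⟨hbc.1, hbc.2.2.1⟩
  have h2 : RR m a.2 c.2 := RR_trans ⟨hab.2.1, hab.2.2.2⟩ ⟨hbc.2.1, hbc.2.2.2⟩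
  exact ⟨h1.1, h2.1, h1.2, h2.2⟩

lemma isPNF_iff (m : ℤ) (w : List (ℤ × ℤ)) :
    IsPNF m w ↔ (∀ p ∈ w, 0 ≤ p.1 ∧ p.1 ≤ p.2 ∧ p.2 ≤ m) ∧
      Pairwise (fun p q : ℤ × ℤ => RL p.1 q.1) w ∧
      Pairwise (fun p q : ℤ × ℤ => RR m p.2 q.2) w := by
  unfold IsPNF
  rw [show @List.Chain' (ℤ × ℤ) = List.IsChain from rfl, List.isChain_iff_pairwise]
  constructor
  · rintro ⟨hb, hp⟩
    exact ⟨hb, hp.imp fun h => ⟨h.1, h.2.2.1⟩, hp.imp fun h => ⟨h.2.1, h.2.2.2⟩⟩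
  · rintro ⟨hb, h1, h2⟩
    exact ⟨hb, (h1.and h2).imp fun ⟨a, b⟩ => ⟨a.1, b.1, a.2, b.2⟩⟩



/-- In a PNF-like list, the blocks with second component `= m` form a prefix
of length `t = countP`. -/
lemma split_lemma (m : ℤ) :
    ∀ (w : List (ℤ × ℤ)) (t : ℕ),
      Pairwise (fun p q : ℤ × ℤ => RR m p.2 q.2) w →
      (∀ p ∈ w, p.2 ≤ m) →
      w.countP (fun p => p.2 = m) = t →
      (∀ p ∈ w.take t, p.2 = m) ∧ (∀ p ∈ w.drop t, p.2 < m) := by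
  intro w
  induction w with
  | nil => intro t _ _ _; simp
  | cons a w ih =>
    intro t hpw hb hc
    rw [pairwise_cons] at hpw
    rw [countP_cons] at hc
    by_cases ha : a.2 = m
    · rw [if_pos (by simpa using ha)] at hc
      obtain ⟨t', rfl⟩ : ∃ t', t = t' + 1 := ⟨w.countP (fun p => p.2 = m), by omega⟩
      have := ih t' hpw.2 (fun p hp => hb p (mem_cons_of_mem a hp)) (by omega)
      refine ⟨?_, ?_⟩
      · intro p hp
        rw [take_succ_cons] at hp
        rcases mem_cons.1 hp with rfl | hp
        · exact ha
        · exact this.1 p hp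
      · intro p hp
        rw [drop_succ_cons] at hp
        exact this.2 p hp
    · have hc0 : w.countP (fun p => p.2 = m) = 0 := by
        rw [countP_eq_zero]
        intro q hq
        have h1 : q.2 ≤ a.2 := (hpw.1 q hq).1
        have h2 : a.2 < m := lt_of_le_of_ne (hb a mem_cons_self) ha
        simp only [decide_eq_true_eq]
        omega
      have ht : t = 0 := by
        rw [if_neg (by simpa using ha)] at hc
        omega
      subst ht
      refine ⟨by simp, ?_⟩
      intro p hp
      simp only [drop_zero] at hp
      have h2 : a.2 < m := lt_of_le_of_ne (hb a mem_cons_self) ha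
      rcases mem_cons.1 hp with rfl | hp
      · exact h2
      · have := (hpw.1 p hp).1; omega

/-- Structured form: a PNF of affine length `t` splits into the prefix of blocks
with `r = m` and the strictly-decreasing remainder. -/
def Scond (m : ℤ) (t : ℕ) (u : List (ℤ × ℤ) × List (ℤ × ℤ)) : Prop :=
  u.1.length = t ∧
  (∀ p ∈ u.1, p.2 = m ∧ 0 ≤ p.1 ∧ p.1 ≤ m) ∧
  (∀ p ∈ u.2, 0 ≤ p.1 ∧ p.1 ≤ p.2 ∧ p.2 < m) ∧
  Pairwise (fun p q : ℤ × ℤ => RL p.1 q.1) (u.1 ++ u.2) ∧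
  Pairwise (fun p q : ℤ × ℤ => q.2 < p.2) u.2

lemma scond_of_pnf {m : ℤ} {t : ℕ} {w : List (ℤ × ℤ)}
    (h : IsPNF m w ∧ affineLength m w = t) : Scond m t (w.take t, w.drop t) := by
  obtain ⟨hpnf, haff⟩ := h
  rw [isPNF_iff] at hpnf
  obtain ⟨hb, hL, hR⟩ := hpnf
  have hsplit := split_lemma m w t hR (fun p hp => (hb p hp).2.2) haff
  have htle : t ≤ w.length := haff ▸ countP_le_length
  refine ⟨by simpa using htle, ?_, ?_, ?_, ?_⟩
  · intro p hp
    have hm : p ∈ w := (take_sublist t w).mem hp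
    exact ⟨hsplit.1 p hp, (hb p hm).1, (hsplit.1 p hp) ▸ (hb p hm).2.1⟩
  · intro p hp
    have hm : p ∈ w := (drop_sublist t w).mem hp
    exact ⟨(hb p hm).1, (hb p hm).2.1, hsplit.2 p hp⟩
  · rw [take_append_drop]; exact hL
  · refine (hR.sublist (drop_sublist t w)).imp_of_mem ?_
    intro a b ha hb' hr
    have : b.2 < m := hsplit.2 b hb'
    have : a.2 < m := hsplit.2 a ha
    rcases hr with ⟨h1, h2⟩
    rcases lt_or_eq_of_le h1 with h | h
    · exact h
    · exact absurd (h2 h) (by omega)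

lemma pnf_of_scond {m : ℤ} {t : ℕ} {u : List (ℤ × ℤ) × List (ℤ × ℤ)}
    (h : Scond m t u) : IsPNF m (u.1 ++ u.2) ∧ affineLength m (u.1 ++ u.2) = t := by
  obtain ⟨hlen, h1, h2, hL, hR2⟩ := h
  constructor
  · rw [isPNF_iff]
    refine ⟨?_, hL, ?_⟩
    · intro p hp
      rcases mem_append.1 hp with hp | hp
      · obtain ⟨he, h0, hm⟩ := h1 p hp
        exact ⟨h0, he ▸ hm, le_of_eq he⟩
      · obtain ⟨h0, hlr, hm⟩ := h2 p hp
        exact ⟨h0, hlr, le_of_lt hm⟩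
    · rw [pairwise_append]
      refine ⟨?_, ?_, ?_⟩
      · refine pairwise_of_forall_mem_list ?_
        intro a ha b hb
        exact ⟨le_of_eq (((h1 b hb).1).trans ((h1 a ha).1).symm), fun _ => (h1 a ha).1⟩
      · exact hR2.imp fun h => ⟨le_of_lt h, fun he => absurd he (ne_of_lt h)⟩
      · intro a ha b hb
        have : b.2 < m := (h2 b hb).2.2
        have : a.2 = m := (h1 a ha).1
        exact ⟨by omega, fun he => by omega⟩
  · unfold affineLength
    rw [countP_append]
    have e1 : u.1.countP (fun p => p.2 = m) = u.1.length := by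
      rw [countP_eq_length]
      intro p hp
      simp only [decide_eq_true_eq]
      exact (h1 p hp).1
    have e2 : u.2.countP (fun p => p.2 = m) = 0 := by
      rw [countP_eq_zero]
      intro p hp
      simp only [decide_eq_true_eq]
      exact ne_of_lt (h2 p hp).2.2
    omega

/-- The structure equivalence. -/
def E1 (m : ℤ) (t : ℕ) :
    {w : List (ℤ × ℤ) // IsPNF m w ∧ affineLength m w = t} ≃
      {u : List (ℤ × ℤ) × List (ℤ × ℤ) // Scond m t u} where
  toFun w := ⟨(w.val.take t, w.val.drop t), scond_of_pnf w.2⟩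
  invFun u := ⟨u.val.1 ++ u.val.2, pnf_of_scond u.2⟩
  left_inv w := by
    apply Subtype.ext
    exact take_append_drop t w.val
  right_inv u := by
    apply Subtype.ext
    obtain ⟨⟨u1, u2⟩, h⟩ := u
    have hlen : u1.length = t := h.1
    simp only
    rw [← hlen, take_left, drop_left]


lemma scond_finite (m : ℤ) (t : ℕ) (hm : 0 ≤ m) :
    Finite {u : List (ℤ × ℤ) × List (ℤ × ℤ) // Scond m t u} := by
  classical
  set K : Set (ℤ × ℤ) := Set.Icc ((0 : ℤ), (0 : ℤ)) (m, m) with hK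
  haveI : Finite ↥K := (Set.finite_Icc _ _).to_subtype
  set N : ℕ := t + m.toNat with hN
  haveI : Finite {l : List ↥K // l.length ≤ N} :=
    (List.finite_length_le ↥K N).to_subtype
  have hmem : ∀ (u : List (ℤ × ℤ) × List (ℤ × ℤ)), Scond m t u →
      ∀ p ∈ u.1 ++ u.2, p ∈ K := by
    intro u hu p hp
    obtain ⟨hlen, h1, h2, _, _⟩ := hu
    rw [hK, Set.mem_Icc, Prod.le_def, Prod.le_def]
    rcases mem_append.1 hp with hp | hp
    · obtain ⟨he, h0, hle⟩ := h1 p hp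
      exact ⟨⟨h0, he ▸ hm⟩, hle, le_of_eq he⟩
    · obtain ⟨h0, hlr, hlt⟩ := h2 p hp
      exact ⟨⟨h0, h0.trans hlr⟩, hlr.trans (le_of_lt hlt), le_of_lt hlt⟩
  have hlen : ∀ (u : List (ℤ × ℤ) × List (ℤ × ℤ)), Scond m t u →
      (u.1 ++ u.2).length ≤ N := by
    intro u hu
    obtain ⟨hlen, h1, h2, _, hR2⟩ := hu
    have hnd : (u.2.map Prod.snd).Nodup := by
      refine (pairwise_map.2 ?_).imp (fun h => ne_of_gt h)
      exact hR2
    have hsub : (u.2.map Prod.snd).toFinset ⊆ Finset.Ico (0 : ℤ) m := by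
      intro x hx
      rw [List.mem_toFinset] at hx
      obtain ⟨p, hp, rfl⟩ := List.mem_map.1 hx
      obtain ⟨h0, hlr, hlt⟩ := h2 p hp
      rw [Finset.mem_Ico]
      exact ⟨h0.trans hlr, hlt⟩
    have hcard : (u.2.map Prod.snd).toFinset.card = u.2.length := by
      rw [List.toFinset_card_of_nodup hnd, List.length_map]
    have := Finset.card_le_card hsub
    rw [hcard, Int.card_Ico] at this
    rw [List.length_append, hlen, hN]
    omega
  set f : {u : List (ℤ × ℤ) × List (ℤ × ℤ) // Scond m t u} →
      {l : List ↥K // l.length ≤ N} := fun u =>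
    ⟨(u.val.1 ++ u.val.2).pmap (fun p hp => (⟨p, hp⟩ : ↥K)) (hmem u.val u.2),
      by rw [List.length_pmap]; exact hlen u.val u.2⟩ with hf
  have hval : ∀ (l : List (ℤ × ℤ)) (H : ∀ p ∈ l, p ∈ K),
      (l.pmap (fun p hp => (⟨p, hp⟩ : ↥K)) H).map Subtype.val = l := by
    intro l H
    rw [List.map_pmap]
    exact (List.pmap_eq_map (p := (· ∈ K)) (f := id) (l := l) H).trans (List.map_id l)
  apply Finite.of_injective f
  intro u v huv
  have h1 : u.val.1 ++ u.val.2 = v.val.1 ++ v.val.2 := by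
    have := congrArg (fun l => List.map Subtype.val l.val) huv
    simpa only [hf, hval] using this
  have h2 := List.append_inj h1 (u.2.1.trans v.2.1.symm)
  apply Subtype.ext
  exact Prod.ext h2.1 h2.2


/-! ### The intermediate condition and the lowering maps -/

/-- Like `Scond (n+1)` but the first components in the prefix are `≤ n`
(no leading `(n+1, n+1)` block). -/
def Xcond (n : ℤ) (t : ℕ) (u : List (ℤ × ℤ) × List (ℤ × ℤ)) : Prop :=
  u.1.length = t ∧
  (∀ p ∈ u.1, p.2 = n + 1 ∧ 0 ≤ p.1 ∧ p.1 ≤ n) ∧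
  (∀ p ∈ u.2, 0 ≤ p.1 ∧ p.1 ≤ p.2 ∧ p.2 < n + 1) ∧
  Pairwise (fun p q : ℤ × ℤ => RL p.1 q.1) (u.1 ++ u.2) ∧
  Pairwise (fun p q : ℤ × ℤ => q.2 < p.2) u.2

def lowL (n : ℤ) (l : List (ℤ × ℤ)) : List (ℤ × ℤ) := l.map (fun p => (p.1, n))
def uppL (n : ℤ) (l : List (ℤ × ℤ)) : List (ℤ × ℤ) := l.map (fun p => (p.1, n + 1))

lemma map_fst_lowL (n : ℤ) (l : List (ℤ × ℤ)) :
    (lowL n l).map Prod.fst = l.map Prod.fst := by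
  unfold lowL; rw [map_map]; rfl

lemma map_fst_uppL (n : ℤ) (l : List (ℤ × ℤ)) :
    (uppL n l).map Prod.fst = l.map Prod.fst := by
  unfold uppL; rw [map_map]; rfl

lemma upp_lowL {n : ℤ} {l : List (ℤ × ℤ)} (h : ∀ p ∈ l, p.2 = n + 1) :
    uppL n (lowL n l) = l := by
  unfold uppL lowL; rw [map_map]
  refine (map_congr_left ?_).trans (map_id l)
  intro p hp
  exact Prod.ext rfl (h p hp).symm

lemma low_uppL {n : ℤ} {l : List (ℤ × ℤ)} (h : ∀ p ∈ l, p.2 = n) :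
    lowL n (uppL n l) = l := by
  unfold uppL lowL; rw [map_map]
  refine (map_congr_left ?_).trans (map_id l)
  intro p hp
  exact Prod.ext rfl (h p hp).symm

lemma PL_of_map_fst_eq {l l' : List (ℤ × ℤ)}
    (h : l.map Prod.fst = l'.map Prod.fst)
    (hp : Pairwise (fun p q : ℤ × ℤ => RL p.1 q.1) l) :
    Pairwise (fun p q : ℤ × ℤ => RL p.1 q.1) l' := by
  have h1 : Pairwise RL (l.map Prod.fst) := pairwise_map.2 hp
  rw [h] at h1
  exact pairwise_map.1 h1

/-- If the head of `u₂` does not have second component `n`, then all second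
components are `< n`. -/
lemma snd_lt_of_not_head {n : ℤ} {v : List (ℤ × ℤ)}
    (hstrict : Pairwise (fun p q : ℤ × ℤ => q.2 < p.2) v)
    (hall : ∀ p ∈ v, p.2 < n + 1)
    (hB2 : ¬ v.head?.map Prod.snd = some n) : ∀ p ∈ v, p.2 < n := by
  cases v with
  | nil => intro p hp; simp at hp
  | cons q v' =>
    have hq : q.2 ≠ n := by simpa using hB2
    have hq' : q.2 < n + 1 := hall q mem_cons_self
    have hqlt : q.2 < n := by omega
    intro p hp
    rcases mem_cons.1 hp with rfl | hp
    · exact hqlt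
    · have := (pairwise_cons.1 hstrict).1 p hp
      omega

/-! ### Stage 2: lowering -/

section Stage2
variable (n : ℤ) (t : ℕ)

lemma fwd_b2_false {u : List (ℤ × ℤ) × List (ℤ × ℤ)} (hu : Xcond n t u)
    (h2 : ¬ u.2.head?.map Prod.snd = some n) : Scond n t (lowL n u.1, u.2) := by
  obtain ⟨hlen, h1, hm2, hPL, hstr⟩ := hu
  refine ⟨by simpa [lowL] using hlen, ?_, ?_, ?_, hstr⟩
  · intro p hp
    obtain ⟨q, hq, rfl⟩ := List.mem_map.1 hp
    exact ⟨rfl, (h1 q hq).2.1, (h1 q hq).2.2⟩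
  · intro p hp
    have hlt := snd_lt_of_not_head hstr (fun p hp => (hm2 p hp).2.2) h2
    exact ⟨(hm2 p hp).1, (hm2 p hp).2.1, hlt p hp⟩
  · refine PL_of_map_fst_eq ?_ hPL
    rw [map_append, map_append, map_fst_lowL]

lemma fwd_b2_true {u : List (ℤ × ℤ) × List (ℤ × ℤ)} (hu : Xcond n t u)
    (h2 : u.2.head?.map Prod.snd = some n) :
    Scond n (t + 1) (lowL n u.1 ++ u.2.take 1, u.2.tail) := by
  obtain ⟨hlen, h1, hm2, hPL, hstr⟩ := hu
  obtain ⟨u1, u2⟩ := u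
  cases u2 with
  | nil => simp at h2
  | cons q v' =>
    have hq : q.2 = n := by simpa using h2
    have htake : take 1 (q :: v') = [q] := rfl
    have htail : (q :: v').tail = v' := rfl
    rw [htake, htail]
    have hstr' := pairwise_cons.1 hstr
    refine ⟨?_, ?_, ?_, ?_, hstr'.2⟩
    · simp [lowL, hlen]
    · intro p hp
      rcases mem_append.1 hp with hp | hp
      · obtain ⟨r, hr, rfl⟩ := List.mem_map.1 hp
        exact ⟨rfl, (h1 r hr).2.1, (h1 r hr).2.2⟩
      · rw [mem_singleton] at hp
        have hmq := hm2 q mem_cons_self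
        rw [hp]
        exact ⟨hq, hmq.1, hq ▸ hmq.2.1⟩
    · intro p hp
      have := hm2 p (mem_cons_of_mem q hp)
      have hlt := hstr'.1 p hp
      exact ⟨this.1, this.2.1, by omega⟩
    · refine PL_of_map_fst_eq ?_ hPL
      rw [append_assoc, singleton_append, map_append, map_append, map_fst_lowL]

lemma bwd_b2_false {u : List (ℤ × ℤ) × List (ℤ × ℤ)} (hu : Scond n t u) :
    Xcond n t (uppL n u.1, u.2) := by
  obtain ⟨hlen, h1, hm2, hPL, hstr⟩ := hu
  refine ⟨by simpa [uppL] using hlen, ?_, ?_, ?_, hstr⟩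
  · intro p hp
    obtain ⟨q, hq, rfl⟩ := List.mem_map.1 hp
    exact ⟨rfl, (h1 q hq).2.1, (h1 q hq).2.2⟩
  · intro p hp
    have := hm2 p hp
    exact ⟨this.1, this.2.1, by omega⟩
  · refine PL_of_map_fst_eq ?_ hPL
    rw [map_append, map_append, map_fst_uppL]

lemma bwd_b2_true {u : List (ℤ × ℤ) × List (ℤ × ℤ)} (hu : Scond n (t + 1) u) :
    Xcond n t (uppL n u.1.dropLast, u.1.getLast?.toList ++ u.2) := by
  obtain ⟨hlen, h1, hm2, hPL, hstr⟩ := hu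
  have hne : u.1 ≠ [] := by
    intro h
    rw [h] at hlen
    simp at hlen
  have hglast : u.1.getLast? = some (u.1.getLast hne) := getLast?_eq_getLast hne
  set g := u.1.getLast hne with hg
  have hgmem : g ∈ u.1 := getLast_mem hne
  have hsplit : u.1.dropLast ++ [g] = u.1 := dropLast_append_getLast hne
  rw [hglast]
  simp only [Option.toList_some]
  refine ⟨?_, ?_, ?_, ?_, ?_⟩
  · simp only [uppL, length_map, length_dropLast, hlen]
    omega
  · intro p hp
    obtain ⟨q, hq, rfl⟩ := List.mem_map.1 hp
    have hq' : q ∈ u.1 := (dropLast_sublist u.1).mem hq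
    exact ⟨rfl, (h1 q hq').2.1, (h1 q hq').2.2⟩
  · intro p hp
    rcases mem_cons.1 (by simpa using hp) with rfl | hp'
    · obtain ⟨he, h0, hle⟩ := h1 g hgmem
      exact ⟨h0, he ▸ hle, by omega⟩
    · have := hm2 p hp'
      exact ⟨this.1, this.2.1, by omega⟩
  · refine PL_of_map_fst_eq ?_ hPL
    conv_lhs => rw [← hsplit]
    rw [singleton_append, append_assoc, singleton_append, map_append, map_append,
      map_fst_uppL]
  · rw [singleton_append, pairwise_cons]
    refine ⟨?_, hstr⟩
    intro p hp
    have h1g := (h1 g hgmem).1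
    have := (hm2 p hp).2.2
    omega

/-- Stage 2 equivalence: lower the `r = n+1` prefix to `r = n`, absorbing an
optional leading `r = n` block of the strict part. -/
def stage2 : {u : List (ℤ × ℤ) × List (ℤ × ℤ) // Xcond n t u} ≃
    {u // Scond n t u} ⊕ {u // Scond n (t + 1) u} where
  toFun u :=
    if h2 : u.val.2.head?.map Prod.snd = some n then
      Sum.inr ⟨(lowL n u.val.1 ++ u.val.2.take 1, u.val.2.tail), fwd_b2_true n t u.2 h2⟩
    else
      Sum.inl ⟨(lowL n u.val.1, u.val.2), fwd_b2_false n t u.2 h2⟩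
  invFun x :=
    match x with
    | Sum.inl u => ⟨(uppL n u.val.1, u.val.2), bwd_b2_false n t u.2⟩
    | Sum.inr u => ⟨(uppL n u.val.1.dropLast, u.val.1.getLast?.toList ++ u.val.2),
        bwd_b2_true n t u.2⟩
  left_inv := by
    rintro ⟨⟨v₁, v₂⟩, hu⟩
    dsimp only
    by_cases h2 : (v₁, v₂).2.head?.map Prod.snd = some n
    · rw [dif_pos h2]
      dsimp only
      cases v₂ with
      | nil => simp at h2
      | cons q v₂' =>
        have htake : take 1 (q :: v₂') = [q] := rfl
        have htail : (q :: v₂').tail = v₂' := rfl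
        apply Subtype.ext
        dsimp only
        rw [htake, htail, getLast?_concat]
        simp only [Option.toList_some, dropLast_concat]
        rw [upp_lowL (fun p hp => (hu.2.1 p hp).1)]
        simp
    · rw [dif_neg h2]
      dsimp only
      apply Subtype.ext
      simp only
      rw [upp_lowL (fun p hp => (hu.2.1 p hp).1)]
  right_inv := by
    rintro (⟨⟨u₁, u₂⟩, hu⟩ | ⟨⟨u₁, u₂⟩, hu⟩) <;> dsimp only
    · have h2 : ¬ (uppL n u₁, u₂).2.head?.map Prod.snd = some n := by
        cases u₂ with
        | nil => simp
        | cons q v' =>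
          have := (hu.2.2.1 q mem_cons_self).2.2
          intro hc
          simp at hc
          omega
      rw [dif_neg h2]
      apply congrArg Sum.inl
      apply Subtype.ext
      simp only
      rw [low_uppL (fun p hp => (hu.2.1 p hp).1)]
    · have hne : u₁ ≠ [] := by
        intro h
        have := hu.1
        rw [h] at this
        simp at this
      have hglast : u₁.getLast? = some (u₁.getLast hne) := getLast?_eq_getLast hne
      set g := u₁.getLast hne with hg
      have hgmem : g ∈ u₁ := getLast_mem hne
      have h2 : ((uppL n u₁.dropLast, u₁.getLast?.toList ++ u₂)).2.head?.map Prod.snd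
          = some n := by
        rw [hglast]
        show Option.map Prod.snd (some g) = some n
        exact congrArg some (hu.2.1 g hgmem).1
      rw [dif_pos h2]
      apply congrArg Sum.inr
      apply Subtype.ext
      have htake : take 1 (g :: u₂) = [g] := rfl
      have htail : (g :: u₂).tail = u₂ := rfl
      simp only [hglast, Option.toList_some, singleton_append]
      rw [htake, htail]
      rw [low_uppL (fun p hp => (hu.2.1 p ((dropLast_sublist u₁).mem hp)).1)]
      rw [dropLast_append_getLast hne]

end Stage2


/-! ### Stage 1: splitting off a leading `(n+1, n+1)` block -/

section Stage1
variable (n : ℤ) (t : ℕ)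

lemma fwd_b1_true {u : List (ℤ × ℤ) × List (ℤ × ℤ)} (hn : 1 ≤ n)
    (hu : Scond (n + 1) (t + 1) u) (h1 : u.1.head? = some (n + 1, n + 1)) :
    Xcond n t (u.1.tail, u.2) := by
  obtain ⟨u1, u2⟩ := u
  obtain ⟨hlen, hm1, hm2, hPL, hstr⟩ := hu
  cases u1 with
  | nil => simp at h1
  | cons a v₁ =>
    simp only [head?_cons, Option.some_inj] at h1
    subst h1
    simp only [length_cons, Nat.add_right_cancel_iff] at hlen
    rw [cons_append, pairwise_cons] at hPL
    refine ⟨by simpa using hlen, ?_, ?_, hPL.2, hstr⟩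
    · intro p hp
      rw [tail_cons] at hp
      have hm := hm1 p (mem_cons_of_mem _ hp)
      have hRL := hPL.1 p (mem_append_left _ hp)
      obtain ⟨hle, himp⟩ := hRL
      simp only at hle himp
      refine ⟨hm.1, hm.2.1, ?_⟩
      by_cases he : p.1 = n + 1
      · have := himp he; omega
      · omega
    · intro p hp
      have := hm2 p hp
      exact ⟨this.1, this.2.1, this.2.2⟩

lemma fwd_b1_false {u : List (ℤ × ℤ) × List (ℤ × ℤ)}
    (hu : Scond (n + 1) (t + 1) u) (h1 : ¬ u.1.head? = some (n + 1, n + 1)) :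
    Xcond n (t + 1) (u.1, u.2) := by
  obtain ⟨u1, u2⟩ := u
  obtain ⟨hlen, hm1, hm2, hPL, hstr⟩ := hu
  refine ⟨hlen, ?_, hm2, hPL, hstr⟩
  cases u1 with
  | nil => intro p hp; simp at hp
  | cons a v₁ =>
    have ha := hm1 a mem_cons_self
    have ha1 : a.1 ≤ n := by
      rcases lt_or_eq_of_le ha.2.2 with h | h
      · omega
      · exfalso
        apply h1
        rw [head?_cons, Option.some_inj]
        exact Prod.ext h ha.1
    rw [cons_append, pairwise_cons] at hPL
    intro p hp
    rcases mem_cons.1 hp with rfl | hp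
    · exact ⟨ha.1, ha.2.1, ha1⟩
    · have hm := hm1 p (mem_cons_of_mem _ hp)
      have hRL := hPL.1 p (mem_append_left _ hp)
      exact ⟨hm.1, hm.2.1, hRL.1.trans ha1⟩

lemma bwd_b1_true {u : List (ℤ × ℤ) × List (ℤ × ℤ)} (hn : 1 ≤ n)
    (hu : Xcond n t u) : Scond (n + 1) (t + 1) ((n + 1, n + 1) :: u.1, u.2) := by
  obtain ⟨hlen, hm1, hm2, hPL, hstr⟩ := hu
  refine ⟨by simp [hlen], ?_, ?_, ?_, hstr⟩
  · intro p hp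
    rcases mem_cons.1 hp with rfl | hp
    · exact ⟨rfl, by omega, le_refl _⟩
    · have := hm1 p hp
      exact ⟨this.1, this.2.1, by omega⟩
  · intro p hp
    have := hm2 p hp
    exact ⟨this.1, this.2.1, this.2.2⟩
  · rw [cons_append, pairwise_cons]
    refine ⟨?_, hPL⟩
    intro p hp
    have hple : p.1 ≤ n := by
      rcases mem_append.1 hp with hp | hp
      · exact (hm1 p hp).2.2
      · have := hm2 p hp; omega
    exact ⟨by omega, fun he => by omega⟩

lemma bwd_b1_false {u : List (ℤ × ℤ) × List (ℤ × ℤ)}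
    (hu : Xcond n (t + 1) u) : Scond (n + 1) (t + 1) (u.1, u.2) := by
  obtain ⟨hlen, hm1, hm2, hPL, hstr⟩ := hu
  refine ⟨hlen, ?_, hm2, hPL, hstr⟩
  intro p hp
  have := hm1 p hp
  exact ⟨this.1, this.2.1, by omega⟩

/-- Stage 1 equivalence. -/
def stage1 (hn : 1 ≤ n) : {u : List (ℤ × ℤ) × List (ℤ × ℤ) // Scond (n + 1) (t + 1) u} ≃
    {u // Xcond n t u} ⊕ {u // Xcond n (t + 1) u} where
  toFun u :=
    if h1 : u.val.1.head? = some (n + 1, n + 1) then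
      Sum.inl ⟨(u.val.1.tail, u.val.2), fwd_b1_true n t hn u.2 h1⟩
    else
      Sum.inr ⟨(u.val.1, u.val.2), fwd_b1_false n t u.2 h1⟩
  invFun x :=
    match x with
    | Sum.inl u => ⟨((n + 1, n + 1) :: u.val.1, u.val.2), bwd_b1_true n t hn u.2⟩
    | Sum.inr u => ⟨(u.val.1, u.val.2), bwd_b1_false n t u.2⟩
  left_inv := by
    rintro ⟨⟨v₁, v₂⟩, hu⟩
    dsimp only
    by_cases h1 : (v₁, v₂).1.head? = some (n + 1, n + 1)
    · rw [dif_pos h1]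
      apply Subtype.ext
      dsimp only
      cases v₁ with
      | nil => simp at h1
      | cons a v₁' =>
        simp only [head?_cons, Option.some_inj] at h1
        rw [tail_cons, h1]
    · rw [dif_neg h1]
  right_inv := by
    rintro (⟨⟨u₁, u₂⟩, hu⟩ | ⟨⟨u₁, u₂⟩, hu⟩) <;> dsimp only
    · have h1 : (((n + 1, n + 1) :: u₁ : List (ℤ × ℤ)).head? = some (n + 1, n + 1)) := rfl
      rw [dif_pos h1]
      apply congrArg Sum.inl
      apply Subtype.ext
      dsimp only
      rw [tail_cons]
    · have h1 : ¬ ((u₁, u₂) : List (ℤ × ℤ) × List (ℤ × ℤ)).1.head? = some (n + 1, n + 1) := by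
        cases u₁ with
        | nil => simp
        | cons a v₁' =>
          have := (hu.2.1 a mem_cons_self).2.2
          simp only [head?_cons, Option.some_inj]
          intro hc
          rw [hc] at this
          simp only at this
          omega
      rw [dif_neg h1]

end Stage1

end NumPNFAux

/-- For all integers `n ≥ 1` and `s ≥ 1`,
`a(n+1,s) = a(n,s-1) + 2·a(n,s) + a(n,s+1)`. -/
theorem numPNF_succ (n : ℤ) (s : ℕ) (hn : 1 ≤ n) (hs : 1 ≤ s) :
    numPNF (n + 1) s = numPNF n (s - 1) + 2 * numPNF n s + numPNF n (s + 1) := by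
  obtain ⟨t, rfl⟩ : ∃ t, s = t + 1 := ⟨s - 1, by omega⟩
  haveI h0 : Finite {u // NumPNFAux.Scond n t u} := NumPNFAux.scond_finite n t (by omega)
  haveI h1 : Finite {u // NumPNFAux.Scond n (t + 1) u} :=
    NumPNFAux.scond_finite n (t + 1) (by omega)
  haveI h2 : Finite {u // NumPNFAux.Scond n (t + 1 + 1) u} :=
    NumPNFAux.scond_finite n (t + 1 + 1) (by omega)
  have e := (NumPNFAux.E1 (n + 1) (t + 1)).trans ((NumPNFAux.stage1 n t hn).trans
    (Equiv.sumCongr (NumPNFAux.stage2 n t) (NumPNFAux.stage2 n (t + 1))))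
  have hcard : numPNF (n + 1) (t + 1) = _ := Nat.card_congr e
  rw [Nat.card_sum, Nat.card_sum, Nat.card_sum] at hcard
  have q0 : Nat.card {u // NumPNFAux.Scond n t u} = numPNF n t :=
    (Nat.card_congr (NumPNFAux.E1 n t)).symm
  have q1 : Nat.card {u // NumPNFAux.Scond n (t + 1) u} = numPNF n (t + 1) :=
    (Nat.card_congr (NumPNFAux.E1 n (t + 1))).symm
  have q2 : Nat.card {u // NumPNFAux.Scond n (t + 1 + 1) u} = numPNF n (t + 1 + 1) :=
    (Nat.card_congr (NumPNFAux.E1 n (t + 1 + 1))).symm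
  rw [q0, q1, q2] at hcard
  simp only [Nat.add_sub_cancel]
  rw [hcard]
  ring
end

section
/- For every integer n ≥ 1: d(n,0) = 0, and for every integer s > n, d(n,s) = a(n,s). (Equivalently: no positive normal form of affine length 0 contains a translate of G(w_n^I) or G(w_n^J), whereas every positive normal form of affine length s > n does.) -/
/-- The grid of a normal form `((l_1,r_1),…,(l_k,r_k))`:
`{(i,j) ∈ ℤ² : 1 ≤ i ≤ k, l_i ≤ j ≤ r_i}`. -/
def grid (w : List (ℤ × ℤ)) : Set (ℤ × ℤ) :=
  {p | ∃ i : ℕ, i < w.length ∧ p.1 = (i : ℤ) + 1 ∧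
    (w.getD i (0, 0)).1 ≤ p.2 ∧ p.2 ≤ (w.getD i (0, 0)).2}

/-- `G` contains a horizontal translate of `G'`. -/
def ContainsTranslate (G G' : Set (ℤ × ℤ)) : Prop :=
  ∃ m : ℤ, ∀ p ∈ G', ((p.1 + m, p.2) : ℤ × ℤ) ∈ G

/-- The normal form `w_n^I`. -/
def wI (n : ℤ) : List (ℤ × ℤ) :=
  if n = 1 then [(1, 1), (0, 1)]
  else if Even n then
    (n - 1, n) :: (((List.range ((n - 2) / 2).toNat).map
      fun t : ℕ => (n - 3 - 2 * (t : ℤ), n - 1 - 2 * (t : ℤ))) ++ [(0, 1)])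
  else
    (n, n) :: (n - 2, n) :: (((List.range ((n - 3) / 2).toNat).map
      fun t : ℕ => (n - 4 - 2 * (t : ℤ), n - 2 - 2 * (t : ℤ))) ++ [(0, 1)])

/-- The normal form `w_n^J`. -/
def wJ (n : ℤ) : List (ℤ × ℤ) :=
  if Even n then
    (n, n) :: (n - 2, n) :: (((List.range ((n - 2) / 2).toNat).map
      fun t : ℕ => (n - 4 - 2 * (t : ℤ), n - 2 - 2 * (t : ℤ))) ++ [(0, 0)])
  else
    (n - 1, n) :: (((List.range ((n - 1) / 2).toNat).map
      fun t : ℕ => (n - 3 - 2 * (t : ℤ), n - 1 - 2 * (t : ℤ))) ++ [(0, 0)])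

/-- `numBadPNF n s` is the number `d(n,s)` of positive normal forms on `n` of affine
length `s` whose grid contains a horizontal translate of `G(w_n^I)` or of `G(w_n^J)`. -/
noncomputable def numBadPNF (n : ℤ) (s : ℕ) : ℕ :=
  Nat.card {w : List (ℤ × ℤ) // IsPNF n w ∧ affineLength n w = s ∧
    (ContainsTranslate (grid w) (grid (wI n)) ∨ ContainsTranslate (grid w) (grid (wJ n)))}

private lemma pnf_trans (n : ℤ) : IsTrans (ℤ × ℤ) (fun p q : ℤ × ℤ =>
    q.1 ≤ p.1 ∧ q.2 ≤ p.2 ∧ (q.1 = p.1 → p.1 = 0) ∧ (q.2 = p.2 → p.2 = n)) := by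
  constructor
  rintro a b c ⟨h1, h2, h3, h4⟩ ⟨g1, g2, g3, g4⟩
  exact ⟨g1.trans h1, g2.trans h2, fun h => h3 (le_antisymm h1 (h ▸ g1)),
    fun h => h4 (le_antisymm h2 (h ▸ g2))⟩

private lemma pnf_pairwise {n : ℤ} {w : List (ℤ × ℤ)} (h : IsPNF n w) :
    ∀ i j, (hi : i < w.length) → (hj : j < w.length) → i < j →
      (w[j].1 ≤ w[i].1 ∧ w[j].2 ≤ w[i].2 ∧ (w[j].1 = w[i].1 → w[i].1 = 0) ∧
        (w[j].2 = w[i].2 → w[i].2 = n)) := by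
  haveI := pnf_trans n
  have := List.pairwise_iff_getElem.mp (List.isChain_iff_pairwise.mp h.2)
  intro i j hi hj hij
  exact this i j hi hj hij

private lemma pnf_r_eq {n : ℤ} {w : List (ℤ × ℤ)} (h : IsPNF n w) :
    ∀ i < affineLength n w, ∃ hi : i < w.length, w[i].2 = n := by
  have hs : affineLength n w ≤ w.length := List.countP_le_length
  intro i his
  have hi : i < w.length := lt_of_lt_of_le his hs
  refine ⟨hi, ?_⟩
  by_contra hne
  have hlt : w[i].2 < n := lt_of_le_of_ne (h.1 _ (List.getElem_mem hi)).2.2 hne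
  have hdrop : List.countP (fun p : ℤ × ℤ => decide (p.2 = n)) (w.drop i) = 0 := by
    rw [List.countP_eq_zero]
    intro a ha
    obtain ⟨k, hk, rfl⟩ := List.getElem_of_mem ha
    rw [List.getElem_drop]
    simp only [decide_eq_true_eq]
    rcases Nat.eq_zero_or_pos k with rfl | hk0
    · simpa using hlt.ne
    · have := pnf_pairwise h i (i + k)
        hi (by simp only [List.length_drop] at hk; omega) (by omega)
      omega
  have heq : affineLength n w =
      List.countP (fun p : ℤ × ℤ => decide (p.2 = n)) (w.take i) +
      List.countP (fun p : ℤ × ℤ => decide (p.2 = n)) (w.drop i) := by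
    rw [affineLength, ← List.countP_append, List.take_append_drop]
  have h1 : List.countP (fun p : ℤ × ℤ => decide (p.2 = n)) (w.take i) ≤ i :=
    le_trans List.countP_le_length (by simp)
  omega

private lemma pnf_l_bound {n : ℤ} {w : List (ℤ × ℤ)} (h : IsPNF n w) :
    ∀ i, (hi : i < w.length) → ∀ c : ℤ, 0 ≤ c → n - i ≤ c → w[i].1 ≤ c := by
  intro i
  induction i with
  | zero =>
    intro hi c _ hc
    have := h.1 _ (List.getElem_mem hi)
    simp only [Nat.cast_zero] at hc
    omega
  | succ i ih =>
    intro hi c hc0 hc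
    have hi' : i < w.length := by omega
    have hadj := pnf_pairwise h i (i + 1) hi' hi (by omega)
    rcases eq_or_lt_of_le hadj.1 with heq | hlt
    · have := hadj.2.2.1 heq
      omega
    · have := ih hi' (c + 1) (by omega) (by push_cast at hc ⊢; omega)
      omega

private lemma contains_of_spec {n : ℤ} {w v : List (ℤ × ℤ)} (m : ℕ) (h : IsPNF n w)
    (hs : v.length + m ≤ affineLength n w)
    (hv : ∀ j, (hj : j < v.length) →
      0 ≤ v[j].1 ∧ n - ((j : ℤ) + (m : ℤ)) ≤ v[j].1 ∧ v[j].2 ≤ n) :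
    ContainsTranslate (grid w) (grid v) := by
  refine ⟨(m : ℤ), ?_⟩
  rintro ⟨x, y⟩ ⟨j, hj, hx, hl, hr⟩
  obtain ⟨hiw, hrn⟩ := pnf_r_eq h (j + m) (by omega)
  rw [List.getD_eq_getElem v (0,0) hj] at hl hr
  obtain ⟨hv0, hvl, hvr⟩ := hv j hj
  refine ⟨j + m, hiw, ?_, ?_, ?_⟩
  · simp only at hx ⊢; push_cast; omega
  · rw [List.getD_eq_getElem w (0,0) hiw]
    exact pnf_l_bound h (j + m) hiw y (by omega) (by push_cast; omega)
  · rw [List.getD_eq_getElem w (0,0) hiw, hrn]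
    omega

private lemma wI_spec (n : ℤ) (hn : 1 ≤ n) :
    ((wI n).length : ℤ) + n / 2 = n + 1 ∧
    ∀ j, (hj : j < (wI n).length) →
      0 ≤ (wI n)[j].1 ∧ n - ((j : ℤ) + n / 2) ≤ (wI n)[j].1 ∧ (wI n)[j].2 ≤ n := by
  by_cases h1 : n = 1
  · subst h1
    have hwI : wI 1 = [(1, 1), (0, 1)] := by rw [wI]; norm_num
    refine ⟨by simp [hwI], ?_⟩
    intro j hj
    rw [hwI] at hj
    simp only [List.length_cons, List.length_nil] at hj
    interval_cases j <;> simp [hwI] <;> omega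
  rcases Int.even_or_odd n with he | ho
  · obtain ⟨k, hk⟩ := he
    have hk1 : 1 ≤ k := by omega
    have hK : (((n - 2) / 2).toNat : ℤ) = k - 1 := by omega
    have hwI : wI n = (n - 1, n) :: (((List.range ((n - 2) / 2).toNat).map
        fun t : ℕ => (n - 3 - 2 * (t : ℤ), n - 1 - 2 * (t : ℤ))) ++ [(0, 1)]) := by
      rw [wI]
      split_ifs with hA
      · rfl
      · exact absurd ⟨k, hk⟩ hA
    have hlen : (wI n).length = ((n - 2) / 2).toNat + 2 := by simp [hwI]
    refine ⟨by rw [hlen]; push_cast; omega, ?_⟩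
    intro j hj
    rw [hlen] at hj
    cases j with
    | zero =>
      simp only [hwI, List.getElem_cons_zero]
      push_cast
      omega
    | succ j' =>
      simp only [hwI, List.getElem_cons_succ]
      rcases lt_or_ge j' ((n - 2) / 2).toNat with hlt | hge
      · rw [List.getElem_append_left (by simpa using hlt)]
        rw [List.getElem_map, List.getElem_range]
        have hj' : (j' : ℤ) ≤ k - 2 := by omega
        refine ⟨by push_cast; omega, by push_cast; omega, by push_cast; omega⟩
      · have hje : j' = ((n - 2) / 2).toNat := by omega
        subst hje
        rw [List.getElem_append_right (by simp)]
        simp only [List.length_map, List.length_range]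
        norm_num
        push_cast
        omega
  · obtain ⟨k, hk⟩ := ho
    have hne : ¬ Even n := by simp [Int.even_iff]; omega
    have hk1 : 1 ≤ k := by omega
    have hK : (((n - 3) / 2).toNat : ℤ) = k - 1 := by omega
    have hwI : wI n = (n, n) :: (n - 2, n) :: (((List.range ((n - 3) / 2).toNat).map
        fun t : ℕ => (n - 4 - 2 * (t : ℤ), n - 2 - 2 * (t : ℤ))) ++ [(0, 1)]) := by
      rw [wI]
      split_ifs
      rfl
    have hlen : (wI n).length = ((n - 3) / 2).toNat + 3 := by simp [hwI]
    refine ⟨by rw [hlen]; push_cast; omega, ?_⟩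
    intro j hj
    rw [hlen] at hj
    cases j with
    | zero =>
      simp only [hwI, List.getElem_cons_zero]
      push_cast
      omega
    | succ j' =>
      cases j' with
      | zero =>
        simp only [hwI, List.getElem_cons_succ, List.getElem_cons_zero]
        push_cast
        omega
      | succ j'' =>
        simp only [hwI, List.getElem_cons_succ]
        rcases lt_or_ge j'' ((n - 3) / 2).toNat with hlt | hge
        · rw [List.getElem_append_left (by simpa using hlt)]
          rw [List.getElem_map, List.getElem_range]
          have hj'' : (j'' : ℤ) ≤ k - 2 := by omega
          refine ⟨by push_cast; omega, by push_cast; omega, by push_cast; omega⟩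
        · have hje : j'' = ((n - 3) / 2).toNat := by omega
          subst hje
          rw [List.getElem_append_right (by simp)]
          simp only [List.length_map, List.length_range]
          norm_num
          push_cast
          omega

private lemma head_point_mem {n : ℤ} (hn : 1 ≤ n) :
    ((1 : ℤ), n) ∈ grid (wI n) ∧ ((1 : ℤ), n) ∈ grid (wJ n) := by
  have hhead : ∀ L : List (ℤ × ℤ), ∀ a b : ℤ, a ≤ n → n ≤ b →
      ((1 : ℤ), n) ∈ grid ((a, b) :: L) := by
    intro L a b ha hb
    exact ⟨0, by simp, by norm_num, by simpa using ha, by simpa using hb⟩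
  constructor
  · by_cases h1 : n = 1
    · subst h1
      have hwI : wI 1 = [(1, 1), (0, 1)] := by rw [wI]; norm_num
      rw [hwI]; exact hhead _ 1 1 le_rfl le_rfl
    · rw [wI]
      split_ifs with hA
      · exact hhead _ (n - 1) n (by omega) le_rfl
      · exact hhead _ n n le_rfl le_rfl
  · rw [wJ]
    split_ifs with hA
    · exact hhead _ n n le_rfl le_rfl
    · exact hhead _ (n - 1) n (by omega) le_rfl

/-- For every integer `n ≥ 1`: `d(n,0) = 0`, and `d(n,s) = a(n,s)` for every `s > n`. -/
theorem numBadPNF_extreme_cases (n : ℤ) (hn : 1 ≤ n) :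
    numBadPNF n 0 = 0 ∧ ∀ s : ℕ, n < (s : ℤ) → numBadPNF n s = numPNF n s := by
  constructor
  · have : IsEmpty {w : List (ℤ × ℤ) // IsPNF n w ∧ affineLength n w = 0 ∧
        (ContainsTranslate (grid w) (grid (wI n)) ∨ ContainsTranslate (grid w) (grid (wJ n)))} := by
      constructor
      rintro ⟨w, hpnf, haff, hc⟩
      have hkey : ∃ m : ℤ, ((1 : ℤ) + m, n) ∈ grid w := by
        rcases hc with ⟨m, hm⟩ | ⟨m, hm⟩
        · exact ⟨m, hm _ (head_point_mem hn).1⟩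
        · exact ⟨m, hm _ (head_point_mem hn).2⟩
      obtain ⟨m, i, hi, _, hl, hr⟩ := hkey
      have hmem := hpnf.1 _ (List.getElem_mem hi)
      rw [List.getD_eq_getElem w (0,0) hi] at hl hr
      have : w[i].2 = n := le_antisymm hmem.2.2 hr
      have := List.countP_eq_zero.mp haff _ (List.getElem_mem hi)
      simp only [decide_eq_true_eq] at this
      exact this ‹w[i].2 = n›
    exact Nat.card_of_isEmpty
  · intro s hs
    rw [numBadPNF, numPNF]
    apply Nat.card_congr
    apply Equiv.subtypeEquivRight
    intro w
    constructor
    · rintro ⟨h1, h2, _⟩; exact ⟨h1, h2⟩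
    · rintro ⟨h1, h2⟩
      refine ⟨h1, h2, Or.inl ?_⟩
      obtain ⟨hlen, hspec⟩ := wI_spec n hn
      have hm : ((n / 2).toNat : ℤ) = n / 2 := Int.toNat_of_nonneg (by omega)
      apply contains_of_spec (n / 2).toNat h1
      · rw [h2]; omega
      · intro j hj
        have := hspec j hj
        rw [hm]
        exact this
end
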